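/- arXiv:1307.0174 — 6 statements merged into one kernel-verified Lean document; each statement's English description precedes it below -/
import Mathlib

section
/- If f : D → D is holomorphic with f(0) = 0 and |f'(0)| = a > 0, then f is injective on the disk of radius a/(1 + √(1 - a²)) centered at 0. -/
open Metric Set Complex

section Helpers

noncomputable def Complex.abs : AbsoluteValue ℂ ℝ := NormedField.toAbsoluteValue ℂ

lemma Complex.norm_eq_abs (z : ℂ) : ‖z‖ = Complex.abs z := rfl

lemma Complex.abs_conj (z : ℂ) : Complex.abs ((starRingEnd ℂ) z) = Complex.abs z :=
  Complex.norm_conj z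

lemma Complex.abs_ofReal (r : ℝ) : Complex.abs (r : ℂ) = |r| :=
  (Complex.norm_real r).trans (Real.norm_eq_abs r)

lemma Complex.sq_abs (z : ℂ) : Complex.abs z ^ 2 = Complex.normSq z := Complex.sq_norm z

lemma Complex.re_le_abs (z : ℂ) : z.re ≤ Complex.abs z := Complex.re_le_norm z

lemma Complex.abs_re_le_abs (z : ℂ) : |z.re| ≤ Complex.abs z := Complex.abs_re_le_norm z

lemma Complex.abs_deriv_le_one_of_mapsTo_ball {f : ℂ → ℂ} {c : ℂ} {R : ℝ}
    (hd : DifferentiableOn ℂ f (ball c R)) (h_maps : MapsTo f (ball c R) (ball c R))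
    (hc : f c = c) (h₀ : 0 < R) : Complex.abs (deriv f c) ≤ 1 :=
  Complex.norm_deriv_le_one_of_mapsTo_ball hd
    (by rw [hc]; exact h_maps.mono_right ball_subset_closedBall) h₀

lemma Complex.abs_le_abs_of_mapsTo_ball_self {f : ℂ → ℂ} {z : ℂ} {R : ℝ}
    (hd : DifferentiableOn ℂ f (ball 0 R)) (h_maps : MapsTo f (ball 0 R) (ball 0 R))
    (h₀ : f 0 = 0) (hz : Complex.abs z < R) : Complex.abs (f z) ≤ Complex.abs z :=
  Complex.norm_le_norm_of_mapsTo_ball hd (h_maps.mono_right ball_subset_closedBall) h₀ hz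


lemma mob_normSq (u w : ℂ) :
    Complex.normSq (1 - (starRingEnd ℂ) u * w) - Complex.normSq (w - u)
      = (1 - Complex.normSq u) * (1 - Complex.normSq w) := by
  simp only [Complex.normSq_apply, Complex.sub_re, Complex.sub_im, Complex.mul_re,
    Complex.mul_im, Complex.one_re, Complex.one_im, Complex.conj_re, Complex.conj_im]
  ring

lemma mob_denom_ne (u w : ℂ) (h : Complex.abs u * Complex.abs w < 1) :
    1 - (starRingEnd ℂ) u * w ≠ 0 := by
  intro hc
  have h1 : (starRingEnd ℂ) u * w = 1 := by linear_combination -hc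
  have h2 : Complex.abs ((starRingEnd ℂ) u * w) = 1 := by rw [h1]; simp
  rw [map_mul, Complex.abs_conj] at h2
  linarith

lemma mob_lt_one (u w : ℂ) (hu : Complex.abs u < 1) (hw : Complex.abs w < 1) :
    Complex.abs ((w - u) / (1 - (starRingEnd ℂ) u * w)) < 1 := by
  have hne : 1 - (starRingEnd ℂ) u * w ≠ 0 := by
    apply mob_denom_ne
    nlinarith [Complex.abs.nonneg u, Complex.abs.nonneg w]
  have hpos : 0 < Complex.abs (1 - (starRingEnd ℂ) u * w) := by
    simpa [Complex.abs.pos_iff] using hne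
  rw [map_div₀, div_lt_one hpos]
  have h1 : Complex.normSq (w - u) < Complex.normSq (1 - (starRingEnd ℂ) u * w) := by
    have := mob_normSq u w
    have hu2 : Complex.normSq u < 1 := by rw [← Complex.sq_abs]; nlinarith [Complex.abs.nonneg u]
    have hw2 : Complex.normSq w < 1 := by rw [← Complex.sq_abs]; nlinarith [Complex.abs.nonneg w]
    nlinarith
  rw [← Complex.sq_abs, ← Complex.sq_abs] at h1
  nlinarith [Complex.abs.nonneg (w - u), hpos]

lemma mob_hasDerivAt (u w : ℂ) (hne : 1 - (starRingEnd ℂ) u * w ≠ 0) :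
    HasDerivAt (fun z => (z - u) / (1 - (starRingEnd ℂ) u * z))
      ((1 - (starRingEnd ℂ) u * u) / (1 - (starRingEnd ℂ) u * w) ^ 2) w := by
  have h1 : HasDerivAt (fun z : ℂ => z - u) 1 w := (hasDerivAt_id w).sub_const u
  have h2 : HasDerivAt (fun z : ℂ => 1 - (starRingEnd ℂ) u * z) (-(starRingEnd ℂ) u) w := by
    simpa using ((hasDerivAt_id w).const_mul ((starRingEnd ℂ) u)).const_sub 1
  have := h1.div h2 hne
  refine this.congr_deriv ?_
  rw [div_left_inj' (pow_ne_zero 2 hne)]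
  ring

lemma schwarz_pick {g : ℂ → ℂ} (hd : DifferentiableOn ℂ g (ball 0 1))
    (hm : MapsTo g (ball (0:ℂ) 1) (ball (0:ℂ) 1)) {z₀ : ℂ} (hz₀ : z₀ ∈ ball (0:ℂ) 1) :
    Complex.abs (deriv g z₀) * (1 - Complex.abs z₀ ^ 2) ≤ 1 - Complex.abs (g z₀) ^ 2 := by
  set c := g z₀ with hc
  have hz₀' : Complex.abs z₀ < 1 := mem_ball_zero_iff.1 hz₀
  have hc1 : Complex.abs c < 1 := mem_ball_zero_iff.1 (hm hz₀)
  have habs_nonneg : (0:ℝ) ≤ Complex.abs z₀ := Complex.abs.nonneg _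
  have hcnn : (0:ℝ) ≤ Complex.abs c := Complex.abs.nonneg _
  set σ : ℂ → ℂ := fun z => (z - (-z₀)) / (1 - (starRingEnd ℂ) (-z₀) * z) with hσdef
  set ψ : ℂ → ℂ := fun w => (w - c) / (1 - (starRingEnd ℂ) c * w) with hψdef
  have hσmaps : MapsTo σ (ball (0:ℂ) 1) (ball (0:ℂ) 1) := fun z hz => by
    refine mem_ball_zero_iff.2 ?_
    exact mob_lt_one (-z₀) z (by simpa using hz₀') (mem_ball_zero_iff.1 hz)
  have hψmaps : MapsTo ψ (ball (0:ℂ) 1) (ball (0:ℂ) 1) := fun w hw => by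
    refine mem_ball_zero_iff.2 ?_
    exact mob_lt_one c w hc1 (mem_ball_zero_iff.1 hw)
  have hσder : ∀ z ∈ ball (0:ℂ) 1, HasDerivAt σ
      ((1 - (starRingEnd ℂ) (-z₀) * (-z₀)) / (1 - (starRingEnd ℂ) (-z₀) * z) ^ 2) z := by
    intro z hz
    apply mob_hasDerivAt
    apply mob_denom_ne
    have hz1 : Complex.abs z < 1 := mem_ball_zero_iff.1 hz
    simp only [map_neg_eq_map]
    nlinarith [Complex.abs.nonneg z, habs_nonneg,
      mul_pos (by linarith : (0:ℝ) < 1 - Complex.abs z₀) (by linarith : (0:ℝ) < 1 - Complex.abs z)]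
  have hψder : ∀ w ∈ ball (0:ℂ) 1, HasDerivAt ψ
      ((1 - (starRingEnd ℂ) c * c) / (1 - (starRingEnd ℂ) c * w) ^ 2) w := by
    intro w hw
    apply mob_hasDerivAt
    apply mob_denom_ne
    have hw1 : Complex.abs w < 1 := mem_ball_zero_iff.1 hw
    nlinarith [Complex.abs.nonneg w, hcnn,
      mul_pos (by linarith : (0:ℝ) < 1 - Complex.abs c) (by linarith : (0:ℝ) < 1 - Complex.abs w)]
  set H : ℂ → ℂ := fun z => ψ (g (σ z)) with hHdef
  have hσ0 : σ 0 = z₀ := by simp [hσdef]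
  have hH0 : H 0 = 0 := by
    have hψc : ψ c = 0 := by
      simp only [hψdef, sub_self, zero_div]
    simp [hHdef, hσ0, ← hc, hψc]
  have hHdiff : DifferentiableOn ℂ H (ball 0 1) := by
    intro z hz
    have h1 := (hσder z hz).differentiableAt
    have h2 : DifferentiableAt ℂ g (σ z) :=
      hd.differentiableAt (isOpen_ball.mem_nhds (hσmaps hz))
    have h3 := (hψder (g (σ z)) (hm (hσmaps hz))).differentiableAt
    exact ((h3.comp _ h2).comp _ h1).differentiableWithinAt
  have hgder : HasDerivAt g (deriv g z₀) z₀ :=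
    (hd.differentiableAt (isOpen_ball.mem_nhds hz₀)).hasDerivAt
  have hHder : HasDerivAt H
      (((1 - (starRingEnd ℂ) c * c) / (1 - (starRingEnd ℂ) c * c) ^ 2) *
        (deriv g z₀ *
          ((1 - (starRingEnd ℂ) (-z₀) * (-z₀)) / (1 - (starRingEnd ℂ) (-z₀) * 0) ^ 2))) 0 := by
    have h1 := hσder 0 (by simp)
    have h2 : HasDerivAt g (deriv g z₀) (σ 0) := hσ0 ▸ hgder
    have h3 : HasDerivAt ψ ((1 - (starRingEnd ℂ) c * c) / (1 - (starRingEnd ℂ) c * c) ^ 2)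
        (g (σ 0)) := by
      rw [hσ0, ← hc]
      exact hψder c (hm hz₀)
    exact (h3.comp 0 (h2.comp 0 h1) : _)
  have hHmaps : MapsTo H (ball (0:ℂ) 1) (ball (H 0) 1) := by
    rw [hH0]
    exact fun z hz => hψmaps (hm (hσmaps hz))
  have hbound : ‖deriv H 0‖ ≤ 1 / 1 :=
    Complex.norm_deriv_le_div_of_mapsTo_ball hHdiff (hHmaps.mono_right ball_subset_closedBall) one_pos
  rw [hHder.deriv] at hbound
  -- now simplify the abs of the derivative value
  have hns_c : ((1 : ℂ) - (starRingEnd ℂ) c * c) = ((1 - Complex.normSq c : ℝ) : ℂ) := by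
    rw [mul_comm, Complex.mul_conj]
    push_cast
    ring
  have hns_z : ((1 : ℂ) - (starRingEnd ℂ) (-z₀) * (-z₀)) = ((1 - Complex.normSq z₀ : ℝ) : ℂ) := by
    rw [map_neg, neg_mul_neg, mul_comm, Complex.mul_conj]
    push_cast
    ring
  have hnsc_pos : 0 < 1 - Complex.normSq c := by
    rw [← Complex.sq_abs]; nlinarith
  have hnsz_pos : 0 < 1 - Complex.normSq z₀ := by
    rw [← Complex.sq_abs]; nlinarith
  rw [hns_c, hns_z] at hbound
  simp only [mul_zero, sub_zero, one_pow, div_one, Complex.norm_eq_abs, map_mul, map_div₀,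
    map_pow, Complex.abs_ofReal] at hbound
  rw [abs_of_pos hnsc_pos, abs_of_pos hnsz_pos] at hbound
  have hsimp : (1 - Complex.normSq c)/(1-Complex.normSq c)^2 = (1-Complex.normSq c)⁻¹ := by
    rw [sq]
    field_simp
  rw [hsimp] at hbound
  have hfin : Complex.abs (deriv g z₀) * (1 - Complex.normSq z₀) ≤ 1 - Complex.normSq c := by
    have h2 := mul_le_mul_of_nonneg_left hbound hnsc_pos.le
    rw [← mul_assoc, mul_inv_cancel₀ hnsc_pos.ne', one_mul, mul_one] at h2
    exact h2
  rw [← Complex.sq_abs, ← Complex.sq_abs] at hfin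
  exact hfin


lemma re_mob_lower (a t : ℝ) (φ : ℂ) (ha : 0 < a) (ha1 : a < 1) (ht : 0 ≤ t) (ht1 : t < 1)
    (hφ : Complex.abs φ ≤ t) :
    (a - t)/(1 - a*t) ≤ (((a:ℂ) - φ)/(1 - (a:ℂ)*φ)).re := by
  set s := φ.re with hs
  set i := φ.im with hi
  have hs_le : s ≤ t := le_trans (Complex.re_le_abs φ) hφ
  have habs_s : |s| ≤ t := le_trans (Complex.abs_re_le_abs φ) hφ
  have hp_le : s^2 + i^2 ≤ t^2 := by
    have : Complex.normSq φ ≤ t^2 := by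
      rw [← Complex.sq_abs]
      nlinarith [Complex.abs.nonneg φ]
    simpa [Complex.normSq_apply, sq] using this
  have has : a * s < 1 := by
    have : a * s ≤ a * t := by nlinarith [abs_le.1 habs_s]
    nlinarith
  have hat : a * t < 1 := by nlinarith
  have hD : 0 < (1 - a*s)^2 + (a*i)^2 := by
    rcases eq_or_ne i 0 with h | h
    · rw [h]; nlinarith
    · positivity
  have hnum : (((a:ℂ) - φ)/(1 - (a:ℂ)*φ)).re
      = ((a - s)*(1 - a*s) + (-i)*(-(a*i))) / ((1 - a*s)^2 + (a*i)^2) := by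
    rw [Complex.div_re]
    simp only [Complex.sub_re, Complex.sub_im, Complex.mul_re, Complex.mul_im,
      Complex.ofReal_re, Complex.ofReal_im, Complex.one_re, Complex.one_im,
      Complex.normSq_apply, ← hs, ← hi]
    ring_nf
  rw [hnum, div_le_div_iff₀ (by nlinarith) hD]
  have h1 : (0:ℝ) ≤ (1-a^2) * ((t-s)*(1-a*s)) :=
    mul_nonneg (by nlinarith) (mul_nonneg (by linarith) (by linarith))
  have h2 : (0:ℝ) ≤ (1-a^2) * (a*i^2) := mul_nonneg (by nlinarith) (by positivity)
  nlinarith [h1, h2]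

lemma quad_pos (a t : ℝ) (ha : 0 < a) (ha1 : a ≤ 1) (ht : 0 ≤ t)
    (htr : t < a/(1+Real.sqrt (1-a^2))) : 0 < a*t^2 - 2*t + a := by
  set s := Real.sqrt (1-a^2) with hsdef
  have hs0 : 0 ≤ s := Real.sqrt_nonneg _
  have hs2 : s^2 = 1-a^2 := Real.sq_sqrt (by nlinarith)
  have hs1 : s < 1 := by nlinarith
  have hts : t*(1+s) < a := by
    rw [div_eq_mul_inv] at htr
    have h1 : (0:ℝ) < 1 + s := by linarith
    calc t*(1+s) < (a * (1+s)⁻¹) * (1+s) := by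
            apply mul_lt_mul_of_pos_right htr h1
      _ = a := by field_simp
  have hta : t*a < 1 - s := by
    have h2 : t*(1+s)*(1-s) < a*(1-s) := by
      apply mul_lt_mul_of_pos_right hts (by linarith)
    have h3 : t*(1+s)*(1-s) = t*a^2 := by nlinarith
    -- t*a^2 < a*(1-s)  ⇒ t*a < 1-s
    nlinarith
  nlinarith [sq_nonneg (1 - t*a), hs2, hta, mul_pos ha ha]

end Helpers

set_option maxHeartbeats 2000000 in
lemma landau_aux (g : ℂ → ℂ) (hd : DifferentiableOn ℂ g (ball (0:ℂ) 1))
    (hm : MapsTo g (ball (0:ℂ) 1) (ball (0:ℂ) 1)) (h0 : g 0 = 0) (a : ℝ)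
    (ha : deriv g 0 = (a:ℂ)) (hpos : 0 < a) :
    InjOn g (ball (0:ℂ) (a / (1 + Real.sqrt (1 - a^2)))) := by
  have ha1 : a ≤ 1 := by
    have h := Complex.abs_deriv_le_one_of_mapsTo_ball hd hm h0 one_pos
    rw [ha] at h
    simpa [Complex.abs_ofReal, abs_of_pos hpos] using h
  set h := dslope g 0 with hh
  have hmem0 : (0:ℂ) ∈ ball (0:ℂ) 1 := mem_ball_self one_pos
  have hdiff_h : DifferentiableOn ℂ h (ball 0 1) :=
    (Complex.differentiableOn_dslope (isOpen_ball.mem_nhds hmem0)).mpr hd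
  have hb : ∀ z ∈ ball (0:ℂ) 1, Complex.abs (h z) ≤ 1 := by
    intro z hz
    have := Complex.norm_dslope_le_div_of_mapsTo_ball hd (by rw [h0]; exact hm.mono_right ball_subset_closedBall) hz
    exact (by simpa using this : ‖dslope g 0 z‖ ≤ 1)
  have hh0 : h 0 = (a:ℂ) := by rw [hh, dslope_same, ha]
  have hgzh : ∀ z : ℂ, g z = z * h z := by
    intro z
    have h1 := sub_smul_dslope g 0 z
    simp only [sub_zero, smul_eq_mul, h0] at h1
    rw [hh, ← h1]
  rcases eq_or_lt_of_le ha1 with heq | hlt_a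
  · -- case a = 1
    have hmax : IsMaxOn (norm ∘ h) (ball (0:ℂ) 1) 0 := by
      intro z hz
      simp only [Function.comp_apply, hh0, ← heq]
      calc ‖h z‖ ≤ 1 := hb z hz
        _ ≤ ‖((a:ℝ):ℂ)‖ := by
              rw [Complex.norm_eq_abs, Complex.abs_ofReal, abs_of_pos hpos, ← heq]
    have hconst := Complex.eqOn_of_isPreconnected_of_isMaxOn_norm
      (convex_ball (0:ℂ) 1).isPreconnected isOpen_ball hdiff_h hmem0 hmax
    have hball_eq : a / (1 + Real.sqrt (1 - a^2)) = 1 := by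
      rw [heq]; norm_num
    rw [hball_eq]
    intro z₁ hz₁ z₂ hz₂ hgz
    have e1 : ∀ z ∈ ball (0:ℂ) 1, g z = z := by
      intro z hz
      rw [hgzh z, hconst hz]
      simp [Function.const_apply, hh0, heq]
    rw [e1 z₁ hz₁, e1 z₂ hz₂] at hgz
    exact hgz
  · -- case a < 1
    have hlt : ∀ z ∈ ball (0:ℂ) 1, Complex.abs (h z) < 1 := by
      intro z hz
      rcases lt_or_eq_of_le (hb z hz) with h1 | h1
      · exact h1
      · exfalso
        have hmax : IsMaxOn (norm ∘ h) (ball (0:ℂ) 1) z := by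
          intro w hw
          simp only [Function.comp_apply, Complex.norm_eq_abs, h1]
          exact hb w hw
        have hconst := Complex.eqOn_of_isPreconnected_of_isMaxOn_norm
          (convex_ball (0:ℂ) 1).isPreconnected isOpen_ball hdiff_h hz hmax
        have := hconst hmem0
        simp only [Function.const_apply] at this
        rw [hh0] at this
        have : Complex.abs ((a:ℝ):ℂ) = Complex.abs (h z) := by rw [this]
        rw [Complex.abs_ofReal, abs_of_pos hpos, h1] at this
        linarith
    have hmaps_h : MapsTo h (ball (0:ℂ) 1) (ball (0:ℂ) 1) := fun z hz =>
      mem_ball_zero_iff.2 (hlt z hz)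
    -- the auxiliary Möbius image of h
    set φ : ℂ → ℂ := fun z => ((a:ℂ) - h z)/(1 - (a:ℂ) * h z) with hφdef
    have hconj_a : (starRingEnd ℂ) ((a:ℝ):ℂ) = ((a:ℝ):ℂ) := Complex.conj_ofReal a
    have habs_a : Complex.abs ((a:ℝ):ℂ) = a := by
      rw [Complex.abs_ofReal, abs_of_pos hpos]
    have hden_ne : ∀ z ∈ ball (0:ℂ) 1, 1 - (a:ℂ) * h z ≠ 0 := by
      intro z hz
      have := mob_denom_ne ((a:ℝ):ℂ) (h z) (by
        rw [habs_a]
        nlinarith [hlt z hz, Complex.abs.nonneg (h z)])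
      rwa [hconj_a] at this
    have hφ_eq : ∀ z : ℂ, φ z = -((h z - (a:ℂ))/(1 - (starRingEnd ℂ) ((a:ℝ):ℂ) * h z)) := by
      intro z
      rw [hφdef, hconj_a]
      simp only
      rw [← neg_div, neg_sub]
    have hφmap : ∀ z ∈ ball (0:ℂ) 1, Complex.abs (φ z) < 1 := by
      intro z hz
      rw [hφ_eq, map_neg_eq_map]
      exact mob_lt_one _ _ (by rwa [habs_a]) (hlt z hz)
    have hφdiff : DifferentiableOn ℂ φ (ball (0:ℂ) 1) := by
      apply DifferentiableOn.div
      · exact (differentiableOn_const _).sub hdiff_h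
      · exact (differentiableOn_const _).sub ((differentiableOn_const _).mul hdiff_h)
      · exact hden_ne
    have hφ0 : φ 0 = 0 := by
      rw [hφdef]
      simp only [hh0, sub_self, zero_div]
    have hφ_le : ∀ z ∈ ball (0:ℂ) 1, Complex.abs (φ z) ≤ Complex.abs z := by
      intro z hz
      exact Complex.abs_le_abs_of_mapsTo_ball_self hφdiff
        (fun w hw => mem_ball_zero_iff.2 (hφmap w hw)) hφ0 (mem_ball_zero_iff.1 hz)
    -- recover h from φ
    have hrec : ∀ z ∈ ball (0:ℂ) 1, h z = ((a:ℂ) - φ z)/(1 - (a:ℂ) * φ z) := by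
      intro z hz
      have hd1 := hden_ne z hz
      have hd2 : 1 - (a:ℂ) * φ z ≠ 0 := by
        have := mob_denom_ne ((a:ℝ):ℂ) (φ z) (by
          rw [habs_a]
          nlinarith [hφmap z hz, Complex.abs.nonneg (φ z)])
        rwa [hconj_a] at this
      rw [eq_div_iff hd2]
      simp only [hφdef]
      rw [mul_comm] at hd1
      field_simp
      ring

    -- radius facts
    set r := a / (1 + Real.sqrt (1 - a^2)) with hrdef
    have hs0 : 0 ≤ Real.sqrt (1 - a^2) := Real.sqrt_nonneg _
    have hr_le_a : r ≤ a := by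
      rw [hrdef]
      calc a / (1 + Real.sqrt (1-a^2)) ≤ a / 1 := by
            apply div_le_div_of_nonneg_left hpos.le one_pos (by linarith)
        _ = a := div_one a
    have hr_lt_1 : r < 1 := lt_of_le_of_lt hr_le_a hlt_a
    -- positivity of the real part of the derivative on ball r
    have key : ∀ z ∈ ball (0:ℂ) r, 0 < (deriv g z).re := by
      intro z hz
      set t := Complex.abs z with htdef
      have ht0 : 0 ≤ t := Complex.abs.nonneg z
      have ht_lt : t < r := mem_ball_zero_iff.1 hz
      have ht_lt_a : t < a := lt_of_lt_of_le ht_lt hr_le_a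
      have ht1 : t < 1 := lt_trans ht_lt hr_lt_1
      have hz1 : z ∈ ball (0:ℂ) 1 := mem_ball_zero_iff.2 (by
        rw [Complex.norm_eq_abs, ← htdef]; linarith)
      have hre : (a - t)/(1 - a*t) ≤ (h z).re := by
        rw [hrec z hz1]
        exact re_mob_lower a t (φ z) hpos hlt_a ht0 ht1 (hφ_le z hz1)
      have hsp := schwarz_pick hdiff_h hmaps_h hz1
      have hg_deriv : deriv g z = h z + z * deriv h z := by
        have hhat : HasDerivAt h (deriv h z) z :=
          (hdiff_h.differentiableAt (isOpen_ball.mem_nhds hz1)).hasDerivAt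
        have hmul : HasDerivAt (fun w => w * h w) (1 * h z + z * deriv h z) z :=
          (hasDerivAt_id z).mul hhat
        have hgg : g = fun w => w * h w := funext hgzh
        rw [hgg, hmul.deriv, one_mul]
      rw [hg_deriv, Complex.add_re]
      -- lower bound the second term
      have h_im_bound : -(t * Complex.abs (deriv h z)) ≤ (z * deriv h z).re := by
        have h1 := Complex.abs_re_le_abs (z * deriv h z)
        rw [map_mul, ← htdef] at h1
        have := abs_le.1 h1
        linarith [this.1]
      -- real-number endgame
      set s0 := (h z).re with hs0def
      set q := Complex.abs (h z) with hqdef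
      set A := Complex.abs (deriv h z) with hAdef
      have hA0 : 0 ≤ A := Complex.abs.nonneg _
      have hq0 : 0 ≤ q := Complex.abs.nonneg _
      have hq1 : q < 1 := hlt z hz1
      have hqs : s0 ≤ q := Complex.re_le_abs (h z)
      have hat : a * t < 1 := by
        have : a * t ≤ 1 * t := mul_le_mul_of_nonneg_right ha1 ht0
        linarith
      have hden : 0 < 1 - a*t := by linarith
      have hanum : 0 < a - t := by linarith
      have hs0_ge : a - t ≤ s0 * (1 - a*t) := by
        rw [div_le_iff₀ hden] at hre
        linarith
      have hs0_pos : 0 < s0 := lt_of_lt_of_le (div_pos hanum hden) hre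
      have hquad := quad_pos a t hpos ha1 ht0 ht_lt
      -- ψ(s0) > 0 : s0*(1-t^2) - t*(1-s0^2) > 0
      have h1t2 : (0:ℝ) < 1 - t^2 := by nlinarith
      have hψpos : 0 < s0*(1-t^2) - t*(1-s0^2) := by
        have hfac : 0 ≤ (s0*(1-a*t) - (a-t)) * ((1-t^2+t*s0)*(1-a*t) + t*(a-t)) := by
          apply mul_nonneg (by linarith)
          have e1 : 0 ≤ (1-t^2+t*s0)*(1-a*t) :=
            mul_nonneg (by nlinarith [mul_nonneg ht0 hs0_pos.le]) hden.le
          have e2 : 0 ≤ t*(a-t) := mul_nonneg ht0 hanum.le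
          linarith
        have hid : (s0*(1-t^2) - t*(1-s0^2)) * (1-a*t)^2
            = (s0*(1-a*t) - (a-t)) * ((1-t^2+t*s0)*(1-a*t) + t*(a-t))
              + (1-t^2)*(a*t^2-2*t+a) := by ring
        have hP : 0 < (s0*(1-t^2) - t*(1-s0^2)) * (1-a*t)^2 := by
          rw [hid]
          have := mul_pos h1t2 hquad
          linarith
        have h2 : (0:ℝ) < (1-a*t)^2 := by positivity
        have h3 := div_pos hP h2
        rwa [mul_div_assoc, div_self h2.ne', mul_one] at h3
      -- t*A < s0
      have htA : t * A < s0 := by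
        have h1 : t * A * (1 - t^2) ≤ t * (1 - q^2) := by
          have h5 := mul_le_mul_of_nonneg_left hsp ht0
          calc t * A * (1-t^2) = t * (A * (1-t^2)) := by ring
            _ ≤ t * (1 - q^2) := h5
        have h2 : t * (1 - q^2) ≤ t * (1 - s0^2) := by
          apply mul_le_mul_of_nonneg_left _ ht0
          nlinarith
        have h4 : t*A*(1-t^2) < s0*(1-t^2) := by linarith
        exact lt_of_mul_lt_mul_right h4 h1t2.le
      linarith
    -- injectivity via strict monotonicity along segments
    intro z₁ hz₁ z₂ hz₂ hgeq
    by_contra hne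
    set d := z₂ - z₁ with hddef
    have hd_ne : d ≠ 0 := sub_ne_zero.2 (Ne.symm hne)
    set γ : ℝ → ℂ := fun t => z₁ + t • d with hγdef
    have hγmem : ∀ t ∈ Icc (0:ℝ) 1, γ t ∈ ball (0:ℂ) r := by
      intro t ht
      exact (convex_ball (0:ℂ) r).add_smul_sub_mem hz₁ hz₂ ht
    have hγ0 : γ 0 = z₁ := by simp [hγdef]
    have hγ1 : γ 1 = z₂ := by simp [hγdef, hddef]
    set u : ℝ → ℝ := fun t => ((starRingEnd ℂ) d * g (γ t)).re with hudef
    have hball_sub : ball (0:ℂ) r ⊆ ball (0:ℂ) 1 := ball_subset_ball (by linarith)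
    have hu_deriv : ∀ t ∈ Icc (0:ℝ) 1,
        HasDerivAt u (((starRingEnd ℂ) d * (d * deriv g (γ t))).re) t := by
      intro t ht
      have hγder : HasDerivAt γ d t := by
        have : HasDerivAt (fun s : ℝ => s • d) ((1:ℝ) • d) t :=
          (hasDerivAt_id t).smul_const d
        exact (by simpa using this : HasDerivAt (fun s : ℝ => s • d) d t).const_add z₁
      have hgder : HasDerivAt g (deriv g (γ t)) (γ t) :=
        (hd.differentiableAt (isOpen_ball.mem_nhds (hball_sub (hγmem t ht)))).hasDerivAt
      have hcomp : HasDerivAt (g ∘ γ) (d • deriv g (γ t)) t := HasDerivAt.scomp (h := γ) (x := t) hgder hγder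
      have hmul : HasDerivAt (fun s => (starRingEnd ℂ) d * (g ∘ γ) s)
          ((starRingEnd ℂ) d * (d • deriv g (γ t))) t := hcomp.const_mul _
      have hfin := HasFDerivAt.comp_hasDerivAt
        (f := fun s => (starRingEnd ℂ) d * (g ∘ γ) s) (x := t)
        Complex.reCLM.hasFDerivAt hmul
      simpa [Function.comp_def, smul_eq_mul, hudef] using hfin
    have humono : StrictMonoOn u (Icc (0:ℝ) 1) := by
      apply strictMonoOn_of_deriv_pos (convex_Icc 0 1)
      · intro t ht
        exact (hu_deriv t ht).continuousAt.continuousWithinAt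
      · intro t ht
        rw [interior_Icc] at ht
        rw [(hu_deriv t (Ioo_subset_Icc_self ht)).deriv]
        have hval : (starRingEnd ℂ) d * (d * deriv g (γ t))
            = deriv g (γ t) * ((Complex.normSq d : ℝ) : ℂ) := by
          rw [show (starRingEnd ℂ) d * (d * deriv g (γ t))
              = deriv g (γ t) * (d * (starRingEnd ℂ) d) by ring, Complex.mul_conj]
        rw [hval]
        have : (deriv g (γ t) * ((Complex.normSq d : ℝ) : ℂ)).re
            = (deriv g (γ t)).re * Complex.normSq d := by
          simp [Complex.mul_re]
        rw [this]
        exact mul_pos (key (γ t) (hγmem t (Ioo_subset_Icc_self ht)))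
          (Complex.normSq_pos.2 hd_ne)
    have h01 : u 0 < u 1 := humono (left_mem_Icc.2 zero_le_one) (right_mem_Icc.2 zero_le_one)
      zero_lt_one
    have hueq : u 0 = u 1 := by
      rw [hudef]
      simp only [hγ0, hγ1, hgeq]
    linarith

theorem univalent_on_small_disk
    (f : ℂ → ℂ) (hd : DifferentiableOn ℂ f (ball (0:ℂ) 1))
    (hm : MapsTo f (ball (0:ℂ) 1) (ball (0:ℂ) 1))
    (h0 : f 0 = 0) (a : ℝ) (ha : a = ‖deriv f 0‖) (hpos : 0 < a) :
    InjOn f (ball (0:ℂ) (a / (1 + Real.sqrt (1 - a^2)))) := by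
  rw [Complex.norm_eq_abs] at ha
  set c := deriv f 0 with hcdef
  set u : ℂ := (starRingEnd ℂ) c / ((a:ℝ):ℂ) with hudef
  have ha_ne : ((a:ℝ):ℂ) ≠ 0 := by
    simp only [ne_eq, Complex.ofReal_eq_zero]
    exact hpos.ne'
  have hu_abs : Complex.abs u = 1 := by
    rw [hudef, map_div₀, Complex.abs_conj, Complex.abs_ofReal, abs_of_pos hpos, ← ha,
      div_self hpos.ne']
  have hu_ne : u ≠ 0 := by
    intro hc
    rw [hc] at hu_abs
    simp at hu_abs
  set g : ℂ → ℂ := fun z => u * f z with hgdef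
  have hgd : DifferentiableOn ℂ g (ball (0:ℂ) 1) := hd.const_mul u
  have hgm : MapsTo g (ball (0:ℂ) 1) (ball (0:ℂ) 1) := by
    intro z hz
    rw [mem_ball_zero_iff]
    have := mem_ball_zero_iff.1 (hm hz)
    calc ‖g z‖ = Complex.abs u * Complex.abs (f z) := by
          rw [hgdef]; simp [Complex.norm_eq_abs, map_mul]
      _ = Complex.abs (f z) := by rw [hu_abs, one_mul]
      _ < 1 := this
  have hg0 : g 0 = 0 := by rw [hgdef]; simp [h0]
  have hgderiv : deriv g 0 = ((a:ℝ):ℂ) := by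
    have hfat : DifferentiableAt ℂ f 0 :=
      hd.differentiableAt (isOpen_ball.mem_nhds (mem_ball_self one_pos))
    have : deriv g 0 = u * deriv f 0 := by
      rw [hgdef, deriv_const_mul u hfat]
    rw [this, ← hcdef, hudef, div_mul_eq_mul_div, Complex.conj_mul']
    rw [Complex.norm_eq_abs, ← ha, sq, mul_div_assoc, div_self ha_ne, mul_one]
  have hinj := landau_aux g hgd hgm hg0 a hgderiv hpos
  intro z₁ hz₁ z₂ hz₂ hfeq
  exact hinj hz₁ hz₂ (by rw [hgdef]; simp only [hfeq])
end

section
/- Let λ ∈ D with λ ≠ 0, let φ_λ(z) = (λ - z)/(1 - conj(λ)·z), and let K be a compact subset of D with r(K) = max{|z| : z ∈ K} < 1. Then for all z ∈ K, |φ_λ(z) - λ/|λ|| ≤ 2(1 - |λ|)/(1 - r(K)). -/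
open Metric

theorem mobius_close_to_unimodular_constant
    (lam : ℂ) (hlam : lam ∈ ball (0:ℂ) 1) (hne : lam ≠ 0)
    (K : Set ℂ) (hK : IsCompact K) (hKne : K.Nonempty) (hKD : K ⊆ ball (0:ℂ) 1)
    (r : ℝ) (hr : IsGreatest ((fun w : ℂ => ‖w‖) '' K) r) :
    ∀ z ∈ K,
      ‖(lam - z) / (1 - (starRingEnd ℂ) lam * z) - lam / (‖lam‖ : ℂ)‖
        ≤ 2 * (1 - ‖lam‖) / (1 - r) := by
  intro z hz
  set a : ℝ := ‖lam‖ with ha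
  have ha0 : 0 < a := norm_pos_iff.mpr hne
  have ha1 : a < 1 := by simpa [ha] using mem_ball_zero_iff.mp hlam
  have hzr : ‖z‖ ≤ r := hr.2 ⟨z, hz, rfl⟩
  obtain ⟨z0, hz0K, hz0⟩ := hr.1
  have hr1 : r < 1 := hz0 ▸ mem_ball_zero_iff.mp (hKD hz0K)
  have hden : 1 - r ≤ ‖1 - (starRingEnd ℂ) lam * z‖ := by
    have h1 : ‖(starRingEnd ℂ) lam * z‖ ≤ r := by
      rw [norm_mul, Complex.norm_conj]
      calc a * ‖z‖ ≤ 1 * r := by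
            apply mul_le_mul ha1.le hzr (norm_nonneg z) zero_le_one
        _ = r := one_mul r
    calc 1 - r ≤ ‖(1:ℂ)‖ - ‖(starRingEnd ℂ) lam * z‖ := by
          simp only [norm_one]; linarith
      _ ≤ ‖1 - (starRingEnd ℂ) lam * z‖ := norm_sub_norm_le _ _
      _ = ‖1 - (starRingEnd ℂ) lam * z‖ := rfl
  have hdpos : 0 < ‖1 - (starRingEnd ℂ) lam * z‖ := lt_of_lt_of_le (by linarith) hden
  have hdne : (1 - (starRingEnd ℂ) lam * z) ≠ 0 := by
    intro h; rw [h] at hdpos; simp at hdpos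
  have hane : ((a:ℂ)) ≠ 0 := by exact_mod_cast ne_of_gt ha0
  have h1 : (starRingEnd ℂ) lam * lam = (a:ℂ) * (a:ℂ) := by
    rw [mul_comm, Complex.mul_conj]
    norm_cast
    rw [Complex.normSq_eq_norm_sq, ha]; ring
  have key : (lam - z) / (1 - (starRingEnd ℂ) lam * z) - lam / (a:ℂ)
      = ((a:ℂ) - 1) * (lam + (a:ℂ) * z) / ((a:ℂ) * (1 - (starRingEnd ℂ) lam * z)) := by
    rw [div_sub_div _ _ hdne hane, div_eq_div_iff (mul_ne_zero hdne hane) (mul_ne_zero hane hdne)]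
    linear_combination ((a:ℂ) * (1 - (starRingEnd ℂ) lam * z) * z) * h1
  rw [key, norm_div, norm_mul, norm_mul]
  have habs1 : ‖(a:ℂ) - 1‖ = 1 - a := by
    rw [show ((a:ℂ) - 1) = ((a - 1 : ℝ) : ℂ) by push_cast; ring, Complex.norm_real, Real.norm_eq_abs,
      abs_of_nonpos (by linarith)]
    ring
  have habsa : ‖((a:ℂ))‖ = a := by
    rw [Complex.norm_real, Real.norm_eq_abs, abs_of_pos ha0]
  rw [habs1, habsa]
  have hnum : ‖lam + (a:ℂ) * z‖ ≤ 2 * a := by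
    calc ‖lam + (a:ℂ) * z‖ ≤ ‖lam‖ + ‖(a:ℂ) * z‖ :=
          norm_add_le _ _
      _ = a + a * ‖z‖ := by rw [norm_mul, habsa]
      _ ≤ 2 * a := by nlinarith [norm_nonneg z, hzr, hr1]
  calc (1 - a) * ‖lam + (a:ℂ) * z‖ / (a * ‖1 - (starRingEnd ℂ) lam * z‖)
      ≤ (1 - a) * (2 * a) / (a * (1 - r)) := by
        apply div_le_div₀ (mul_nonneg (by linarith) (by linarith))
        · exact mul_le_mul_of_nonneg_left hnum (by linarith)
        · exact mul_pos ha0 (by linarith)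
        · exact mul_le_mul_of_nonneg_left hden (le_of_lt ha0)
    _ = 2 * (1 - a) / (1 - r) := by
        rw [div_eq_div_iff (ne_of_gt (mul_pos ha0 (by linarith))) (ne_of_gt (by linarith : (0:ℝ) < 1 - r))]
        · ring
end

section
/- Let {z_n} be a sequence in the open unit disk with lim |z_n| = 1. Then there exists a subsequence {w_n} such that for all k, the product over j < k of d(w_j, w_k) exceeds 1 - 1/(k+1)², where d is the pseudohyperbolic distance. Consequently, lim_{k→∞} ∏_{j ≠ k} d(w_j, w_k) = 1, i.e. {w_n} is a thin Blaschke sequence. -/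
open Metric Filter Topology

/-- The pseudohyperbolic distance on the unit disk. -/
noncomputable def pd (z w : ℂ) : ℝ := ‖(z - w) / (1 - (starRingEnd ℂ) w * z)‖

lemma pd_identity (z w : ℂ) :
    ‖1 - (starRingEnd ℂ) w * z‖ ^ 2 - ‖z - w‖ ^ 2
      = (1 - ‖z‖ ^ 2) * (1 - ‖w‖ ^ 2) := by
  simp only [Complex.sq_norm]
  simp [Complex.normSq_apply, Complex.sub_re, Complex.sub_im, Complex.mul_re, Complex.mul_im,
    Complex.conj_re, Complex.conj_im]
  ring

lemma denom_lb {z w : ℂ} (hz : ‖z‖ < 1) (hw : ‖w‖ ≤ 1) :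
    1 - ‖z‖ ≤ ‖1 - (starRingEnd ℂ) w * z‖ := by
  have h1 : ‖(starRingEnd ℂ) w * z‖ ≤ ‖z‖ := by
    rw [norm_mul, Complex.norm_conj]
    nlinarith [norm_nonneg z, norm_nonneg w]
  have h2 := norm_sub_norm_le (1:ℂ) ((starRingEnd ℂ) w * z)
  simp only [norm_one] at h2
  linarith

lemma pd_nonneg (z w : ℂ) : 0 ≤ pd z w := norm_nonneg _

lemma pd_symm (z w : ℂ) : pd z w = pd w z := by
  unfold pd
  rw [norm_div, norm_div]
  congr 1
  · exact norm_sub_rev z w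
  · rw [← Complex.norm_conj (1 - (starRingEnd ℂ) z * w)]
    congr 1
    simp only [map_sub, map_one, map_mul, Complex.conj_conj]
    ring

lemma pd_le_one {z w : ℂ} (hz : ‖z‖ < 1) (hw : ‖w‖ < 1) :
    pd z w ≤ 1 := by
  have hd : 1 - ‖z‖ ≤ ‖1 - (starRingEnd ℂ) w * z‖ :=
    denom_lb hz hw.le
  have hdpos : 0 < ‖1 - (starRingEnd ℂ) w * z‖ := by linarith
  rw [pd, norm_div, div_le_one hdpos]
  have hid := pd_identity z w
  have h1 := norm_nonneg (z - w)
  have h2 : 0 < 1 - ‖z‖ ^ 2 := by nlinarith [norm_nonneg z]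
  have h3 : 0 < 1 - ‖w‖ ^ 2 := by nlinarith [norm_nonneg w]
  nlinarith [mul_pos h2 h3]

lemma pd_lower {z w : ℂ} (hz : ‖z‖ < 1) (hw : ‖w‖ < 1) :
    1 - (1 - ‖z‖ ^ 2) * (1 - ‖w‖ ^ 2) / (1 - ‖z‖) ^ 2
      ≤ pd z w := by
  have hd : 1 - ‖z‖ ≤ ‖1 - (starRingEnd ℂ) w * z‖ :=
    denom_lb hz hw.le
  set D := ‖1 - (starRingEnd ℂ) w * z‖ with hD
  set N := ‖z - w‖ with hN
  have hzpos : (0:ℝ) < 1 - ‖z‖ := by linarith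
  have hdpos : 0 < D := by linarith
  have hid := pd_identity z w
  rw [← hD, ← hN] at hid
  have h2 : 0 < 1 - ‖z‖ ^ 2 := by nlinarith [norm_nonneg z]
  have h3 : 0 < 1 - ‖w‖ ^ 2 := by nlinarith [norm_nonneg w]
  have hnum : (0:ℝ) ≤ (1 - ‖z‖ ^ 2) * (1 - ‖w‖ ^ 2) :=
    le_of_lt (mul_pos h2 h3)
  have hpd : pd z w = N / D := by rw [pd, norm_div]
  have hple : pd z w ≤ 1 := pd_le_one hz hw
  have hpnn : 0 ≤ pd z w := pd_nonneg z w
  have hfrac : (1 - ‖z‖ ^ 2) * (1 - ‖w‖ ^ 2) / D ^ 2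
      ≤ (1 - ‖z‖ ^ 2) * (1 - ‖w‖ ^ 2) / (1 - ‖z‖) ^ 2 := by
    apply div_le_div_of_nonneg_left hnum (by positivity) (by nlinarith)
  have hpd2 : pd z w ^ 2 = 1 - (1 - ‖z‖ ^ 2) * (1 - ‖w‖ ^ 2) / D ^ 2 := by
    rw [hpd, div_pow]
    field_simp
    linarith
  nlinarith [sq_nonneg (pd z w)]

/-- For `a` fixed in the disk and `|z n| → 1`, eventually `pd a (z n) ≥ 1 - ε`. -/
lemma eventually_pd_ge (z : ℕ → ℂ) (hz : ∀ n, ‖z n‖ < 1)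
    (hlim : Tendsto (fun n => ‖z n‖) atTop (𝓝 1))
    {a : ℂ} (ha : ‖a‖ < 1) {ε : ℝ} (hε : 0 < ε) :
    ∀ᶠ n in atTop, 1 - ε ≤ pd a (z n) := by
  have h2 : Tendsto
      (fun n => (1 - ‖a‖ ^ 2) * (1 - ‖z n‖ ^ 2)
        / (1 - ‖a‖) ^ 2) atTop
      (𝓝 ((1 - ‖a‖ ^ 2) * (1 - (1:ℝ) ^ 2) / (1 - ‖a‖) ^ 2)) :=
    ((tendsto_const_nhds.sub (hlim.pow 2)).const_mul _).div_const _
  norm_num at h2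
  filter_upwards [h2.eventually_le_const hε] with n hn
  have := pd_lower ha (hz n)
  linarith

/-- recursively chosen subsequence indices -/
noncomputable def phi (z : ℕ → ℂ) : ℕ → ℕ
  | 0 => 0
  | k + 1 => sInf {n | ∀ j < k + 1,
      phi z j < n ∧ 1 - 1 / ((k : ℝ) + 2) ^ 3 ≤ pd (z (phi z j)) (z n)}
  termination_by k => k
  decreasing_by all_goals omega

lemma one_le_cube (m : ℕ) : (1:ℝ) ≤ ((m:ℝ) + 1) ^ 3 := by
  have h : (1:ℝ) ≤ (m:ℝ) + 1 := by linarith [Nat.cast_nonneg (α := ℝ) m]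
  exact one_le_pow₀ h

/-- Weierstrass product inequality. -/
lemma weier (s : Finset ℕ) (g : ℕ → ℝ) (h0 : ∀ j, 0 ≤ g j) (h1 : ∀ j, g j ≤ 1) :
    1 - ∑ j ∈ s, g j ≤ ∏ j ∈ s, (1 - g j) := by
  induction s using Finset.induction with
  | empty => simp
  | @insert a s ha ih =>
    rw [Finset.prod_insert ha, Finset.sum_insert ha]
    have hp : (0:ℝ) ≤ ∏ j ∈ s, (1 - g j) :=
      Finset.prod_nonneg fun j _ => by linarith [h1 j]
    have hs : (0:ℝ) ≤ ∑ j ∈ s, g j := Finset.sum_nonneg fun j _ => h0 j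
    have h2 : (1 - g a) * (1 - ∑ j ∈ s, g j) ≤ (1 - g a) * ∏ j ∈ s, (1 - g j) :=
      mul_le_mul_of_nonneg_left ih (by linarith [h1 a])
    nlinarith [h0 a]

theorem exists_thin_subsequence
    (z : ℕ → ℂ) (hz : ∀ n, z n ∈ ball (0:ℂ) 1)
    (hlim : Tendsto (fun n => ‖z n‖) atTop (𝓝 1)) :
    ∃ φ : ℕ → ℕ, StrictMono φ ∧
      (∀ k : ℕ, 1 - 1/((k:ℝ)+1)^2 < ∏ j ∈ Finset.range k, pd (z (φ j)) (z (φ k))) ∧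
      Tendsto (fun k => ∏' j : ℕ, if j = k then 1 else pd (z (φ j)) (z (φ k)))
        atTop (𝓝 1) := by
  have hz' : ∀ n, ‖z n‖ < 1 := by
    intro n; have := hz n; simpa [Complex.dist_eq] using this
  -- membership of the recursively defined indices
  have hmem : ∀ k : ℕ, ∀ j < k + 1,
      phi z j < phi z (k+1) ∧
        1 - 1 / ((k : ℝ) + 2) ^ 3 ≤ pd (z (phi z j)) (z (phi z (k+1))) := by
    intro k
    have hne : {n | ∀ j < k + 1,
        phi z j < n ∧ 1 - 1 / ((k : ℝ) + 2) ^ 3 ≤ pd (z (phi z j)) (z n)}.Nonempty := by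
      have hev : ∀ j : ℕ, ∀ᶠ n in atTop,
          phi z j < n ∧ 1 - 1 / ((k : ℝ) + 2) ^ 3 ≤ pd (z (phi z j)) (z n) :=
        fun j => (eventually_gt_atTop _).and
          (eventually_pd_ge z hz' hlim (hz' _) (by positivity))
      have hall : ∀ᶠ n in atTop, ∀ j ∈ Finset.range (k+1),
          phi z j < n ∧ 1 - 1 / ((k : ℝ) + 2) ^ 3 ≤ pd (z (phi z j)) (z n) :=
        (eventually_all_finset _).2 fun j _ => hev j
      obtain ⟨n, hn⟩ := hall.exists
      exact ⟨n, fun j hj => hn j (Finset.mem_range.2 hj)⟩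
    have : phi z (k+1) ∈ {n | ∀ j < k + 1,
        phi z j < n ∧ 1 - 1 / ((k : ℝ) + 2) ^ 3 ≤ pd (z (phi z j)) (z n)} := by
      rw [phi]; exact Nat.sInf_mem hne
    exact this
  have hmono : StrictMono (phi z) :=
    strictMono_nat_of_lt_succ fun k => (hmem k k (lt_add_one k)).1
  -- distance bound, restated
  have hpd : ∀ k j : ℕ, j < k →
      1 - 1 / ((k:ℝ) + 1) ^ 3 ≤ pd (z (phi z j)) (z (phi z k)) := by
    intro k j hj
    match k, hj with
    | (m+1), hj =>
      have := (hmem m j (by omega)).2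
      have hc : ((m:ℝ) + 2) = ((m+1:ℕ):ℝ) + 1 := by push_cast; ring
      rw [hc] at this
      exact this
  refine ⟨phi z, hmono, ?_, ?_⟩
  · -- finite products
    intro k
    have hplb : (1 - 1 / ((k:ℝ) + 1) ^ 3) ^ k
        ≤ ∏ j ∈ Finset.range k, pd (z (phi z j)) (z (phi z k)) := by
      have := Finset.prod_le_prod (s := Finset.range k)
        (f := fun _ => 1 - 1 / ((k:ℝ) + 1) ^ 3)
        (g := fun j => pd (z (phi z j)) (z (phi z k)))
        (fun j _ => by
          have h1 : 1 / ((k:ℝ)+1)^3 ≤ 1 :=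
            div_le_one_of_le₀ (one_le_cube k) (by positivity)
          linarith)
        (fun j hj => hpd k j (Finset.mem_range.1 hj))
      simpa using this
    have hbern : 1 - (k:ℝ) * (1 / ((k:ℝ) + 1) ^ 3) ≤ (1 - 1 / ((k:ℝ) + 1) ^ 3) ^ k := by
      have := one_add_mul_le_pow (a := -(1 / ((k:ℝ) + 1) ^ 3))
        (by
          have h1 : 0 ≤ 1 / ((k:ℝ)+1)^3 := by positivity
          have h2 : 1 / ((k:ℝ)+1)^3 ≤ 1 :=
            div_le_one_of_le₀ (one_le_cube k) (by positivity)
          linarith) k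
      simpa [sub_eq_add_neg, mul_neg] using this
    have hstrict : 1 - 1/((k:ℝ)+1)^2 < 1 - (k:ℝ) * (1 / ((k:ℝ) + 1) ^ 3) := by
      have hk : (0:ℝ) < (k:ℝ) + 1 := by positivity
      have : (k:ℝ) * (1 / ((k:ℝ) + 1) ^ 3) < 1/((k:ℝ)+1)^2 := by
        rw [mul_one_div, div_lt_div_iff₀ (by positivity) (by positivity)]
        nlinarith [mul_lt_mul_of_pos_right (lt_add_one (k:ℝ)) (pow_pos hk 2)]
      linarith
    linarith
  · -- infinite products
    set E : ℕ → ℝ := fun m => 1 / ((m:ℝ) + 1) ^ 3 with hE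
    have hE0 : ∀ m, 0 ≤ E m := fun m => by positivity
    have hE1 : ∀ m, E m ≤ 1 := fun m =>
      div_le_one_of_le₀ (one_le_cube m) (by positivity)
    have hEsum : Summable E := by
      have h3 : Summable (fun n : ℕ => 1 / (n:ℝ) ^ 3) :=
        Real.summable_one_div_nat_pow.2 (by norm_num)
      have h4 := (summable_nat_add_iff 1).2 h3
      apply h4.congr
      intro m
      simp only [hE]
      push_cast
      ring
    set f : ℕ → ℕ → ℝ := fun k j => if j = k then 1 else pd (z (phi z j)) (z (phi z k)) with hf
    have hub : ∀ k j, f k j ≤ 1 := by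
      intro k j
      by_cases h : j = k
      · simp [hf, h]
      · simp only [hf, if_neg h]; exact pd_le_one (hz' _) (hz' _)
    have hnn : ∀ k j, 0 ≤ f k j := by
      intro k j
      by_cases h : j = k
      · simp [hf, h]
      · simp only [hf, if_neg h]; exact pd_nonneg _ _
    have hlb : ∀ k j, 1 - E (max j k) ≤ f k j := by
      intro k j
      rcases lt_trichotomy j k with h | h | h
      · simp only [hf, if_neg h.ne]
        have := hpd k j h
        rwa [max_eq_right h.le]
      · subst h
        simp only [hf, if_pos rfl, max_self]
        linarith [hE0 j]
      · simp only [hf, if_neg h.ne']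
        rw [max_eq_left h.le, pd_symm]
        exact hpd j k h
    -- each f k is multipliable with product its infimum
    have hanti : ∀ k, Antitone (fun s : Finset ℕ => ∏ j ∈ s, f k j) := by
      intro k s t hst
      show ∏ j ∈ t, f k j ≤ ∏ j ∈ s, f k j
      rw [← Finset.prod_sdiff hst]
      have h1 : ∏ j ∈ t \ s, f k j ≤ 1 :=
        Finset.prod_le_one (fun j _ => hnn k j) (fun j _ => hub k j)
      have h2 : (0:ℝ) ≤ ∏ j ∈ s, f k j := Finset.prod_nonneg fun j _ => hnn k j
      have h3 : (0:ℝ) ≤ ∏ j ∈ t \ s, f k j := Finset.prod_nonneg fun j _ => hnn k j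
      nlinarith
    have hbdd : ∀ k, BddBelow (Set.range fun s : Finset ℕ => ∏ j ∈ s, f k j) := by
      intro k
      exact ⟨0, by rintro x ⟨s, rfl⟩; exact Finset.prod_nonneg fun j _ => hnn k j⟩
    have hhp : ∀ k, HasProd (f k) (⨅ s : Finset ℕ, ∏ j ∈ s, f k j) :=
      fun k => tendsto_atTop_ciInf (hanti k) (hbdd k)
    have htp : ∀ k, ∏' j, f k j = ⨅ s : Finset ℕ, ∏ j ∈ s, f k j :=
      fun k => (hhp k).tprod_eq
    -- tail sums
    set T : ℕ → ℝ := fun k => ∑' j, E (j + (k+1)) with hT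
    have hTsum : ∀ k, Summable (fun j => E (j + (k+1))) :=
      fun k => (summable_nat_add_iff (k+1)).2 hEsum
    have hT0 : ∀ k, 0 ≤ T k := fun k => tsum_nonneg fun j => hE0 _
    -- lower bound for partial products
    have hlow : ∀ k : ℕ, 1 - 1/((k:ℝ)+1)^2 - T k ≤ ∏' j, f k j := by
      intro k
      rw [htp k]
      apply le_ciInf
      intro s
      have step1 : ∏ j ∈ s, (1 - E (max j k)) ≤ ∏ j ∈ s, f k j :=
        Finset.prod_le_prod (fun j _ => by linarith [hE1 (max j k)]) (fun j _ => hlb k j)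
      have step2 : 1 - ∑ j ∈ s, E (max j k) ≤ ∏ j ∈ s, (1 - E (max j k)) :=
        weier s _ (fun j => hE0 _) (fun j => hE1 _)
      have step3 : ∑ j ∈ s, E (max j k) ≤ 1/((k:ℝ)+1)^2 + T k := by
        rw [← Finset.sum_filter_add_sum_filter_not s (fun j => j ≤ k)]
        have hA : ∑ j ∈ s.filter (fun j => j ≤ k), E (max j k)
            ≤ 1/((k:ℝ)+1)^2 := by
          have he : ∀ j ∈ s.filter (fun j => j ≤ k), E (max j k) = E k := by
            intro j hj
            rw [max_eq_right (Finset.mem_filter.1 hj).2]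
          rw [Finset.sum_congr rfl he, Finset.sum_const, nsmul_eq_mul]
          have hcard : (s.filter (fun j => j ≤ k)).card ≤ k + 1 := by
            have hsub : s.filter (fun j => j ≤ k) ⊆ Finset.range (k+1) := by
              intro j hj
              have hjk := (Finset.mem_filter.1 hj).2
              exact Finset.mem_range.2 (by omega)
            calc (s.filter (fun j => j ≤ k)).card ≤ (Finset.range (k+1)).card :=
                  Finset.card_le_card hsub
              _ = k + 1 := Finset.card_range _
          have : ((s.filter (fun j => j ≤ k)).card : ℝ) ≤ (k:ℝ) + 1 := by
            exact_mod_cast hcard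
          have hEk : E k = 1 / ((k:ℝ)+1)^3 := rfl
          calc ((s.filter (fun j => j ≤ k)).card : ℝ) * E k
              ≤ ((k:ℝ)+1) * E k := by
                apply mul_le_mul_of_nonneg_right this (hE0 k)
            _ = 1/((k:ℝ)+1)^2 := by
                rw [hEk]; field_simp
        have hB : ∑ j ∈ s.filter (fun j => ¬ j ≤ k), E (max j k) ≤ T k := by
          have he : ∀ j ∈ s.filter (fun j => ¬ j ≤ k), E (max j k) = E ((j - (k+1)) + (k+1)) := by
            intro j hj
            have hjk : k < j := by
              have := (Finset.mem_filter.1 hj).2; omega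
            rw [max_eq_left hjk.le]
            congr 1
            omega
          rw [Finset.sum_congr rfl he]
          have himg : ∑ j ∈ s.filter (fun j => ¬ j ≤ k), E ((j - (k+1)) + (k+1))
              = ∑ i ∈ (s.filter (fun j => ¬ j ≤ k)).image (fun j => j - (k+1)),
                  E (i + (k+1)) := by
            rw [Finset.sum_image]
            intro x hx y hy hxy
            have hxk : k < x := by have := (Finset.mem_filter.1 hx).2; omega
            have hyk : k < y := by have := (Finset.mem_filter.1 hy).2; omega
            simp only at hxy; omega
          rw [himg]
          exact Summable.sum_le_tsum _ (fun i _ => hE0 _) (hTsum k)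
        linarith
      linarith
    have hup : ∀ k : ℕ, ∏' j, f k j ≤ 1 := by
      intro k
      rw [htp k]
      have := ciInf_le (hbdd k) (∅ : Finset ℕ)
      simpa using this
    -- limits
    have hTlim : Tendsto T atTop (𝓝 0) := by
      have := (tendsto_sum_nat_add E).comp (tendsto_add_atTop_nat 1)
      exact this
    have hsq : Tendsto (fun k : ℕ => 1/((k:ℝ)+1)^2) atTop (𝓝 0) := by
      have h1 : Tendsto (fun k : ℕ => 1/((k:ℝ)+1)) atTop (𝓝 0) :=
        tendsto_one_div_add_atTop_nhds_zero_nat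
      have h2 := h1.pow 2
      have heq : (fun k : ℕ => 1/((k:ℝ)+1)^2) = fun k : ℕ => (1/((k:ℝ)+1))^2 := by
        funext k; rw [div_pow, one_pow]
      rw [heq]
      simpa using h2
    have hlower : Tendsto (fun k : ℕ => 1 - 1/((k:ℝ)+1)^2 - T k) atTop (𝓝 1) := by
      have hc : Tendsto (fun _ : ℕ => (1:ℝ)) atTop (𝓝 1) := tendsto_const_nhds
      have := (hc.sub hsq).sub hTlim
      simpa using this
    exact tendsto_of_tendsto_of_tendsto_of_le_of_le hlower tendsto_const_nhds
      (fun k => hlow k) (fun k => hup k)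
end

section
/- Let B be a finite Blaschke product of degree n ≥ 2. Then B', restricted to the open unit disk D, has exactly n - 1 zeros counting multiplicity (Bochner's theorem on Blaschke critical points, disk part). -/
open Metric

namespace Bochner

open Polynomial

noncomputable def PP {n : ℕ} (a : Fin n → ℂ) : Polynomial ℂ := ∏ k, (C (a k) - X)
noncomputable def QQ {n : ℕ} (a : Fin n → ℂ) : Polynomial ℂ :=
  ∏ k, (1 - C ((starRingEnd ℂ) (a k)) * X)

lemma eval_PP {n : ℕ} (a : Fin n → ℂ) (z : ℂ) : (PP a).eval z = ∏ k, (a k - z) := by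
  simp [PP, Polynomial.eval_prod]

lemma eval_QQ {n : ℕ} (a : Fin n → ℂ) (z : ℂ) :
    (QQ a).eval z = ∏ k, (1 - (starRingEnd ℂ) (a k) * z) := by
  simp [QQ, Polynomial.eval_prod]

lemma map_conj_PP {n : ℕ} (a : Fin n → ℂ) :
    (PP a).map (starRingEnd ℂ) = PP (fun k => (starRingEnd ℂ) (a k)) := by
  simp [PP, Polynomial.map_prod]

lemma map_conj_QQ {n : ℕ} (a : Fin n → ℂ) :
    (QQ a).map (starRingEnd ℂ) = QQ (fun k => (starRingEnd ℂ) (a k)) := by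
  simp [QQ, Polynomial.map_prod]

lemma eval_map_conj (p : Polynomial ℂ) (z : ℂ) :
    (p.map (starRingEnd ℂ)).eval ((starRingEnd ℂ) z) = (starRingEnd ℂ) (p.eval z) := by
  rw [Polynomial.eval_map, Polynomial.eval₂_at_apply]

lemma natDegree_PP_le {n : ℕ} (a : Fin n → ℂ) : (PP a).natDegree ≤ n := by
  refine le_trans (Polynomial.natDegree_prod_le _ _) ?_
  calc ∑ k : Fin n, (C (a k) - X).natDegree ≤ ∑ _k : Fin n, 1 := by
        refine Finset.sum_le_sum fun k _ => ?_
        refine le_trans (Polynomial.natDegree_sub_le _ _) ?_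
        simp
    _ = n := by simp

lemma natDegree_QQ_le {n : ℕ} (a : Fin n → ℂ) : (QQ a).natDegree ≤ n := by
  refine le_trans (Polynomial.natDegree_prod_le _ _) ?_
  calc ∑ k : Fin n, (1 - C ((starRingEnd ℂ) (a k)) * X).natDegree ≤ ∑ _k : Fin n, 1 := by
        refine Finset.sum_le_sum fun k _ => ?_
        refine le_trans (Polynomial.natDegree_sub_le _ _) ?_
        simp [Polynomial.natDegree_C_mul_le]
        exact le_trans (Polynomial.natDegree_mul_le) (by simp)
    _ = n := by simp


noncomputable def RR {n : ℕ} (a : Fin n → ℂ) : Polynomial ℂ :=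
  derivative (PP a) * QQ a - PP a * derivative (QQ a)

lemma natDegree_RR_le (m : ℕ) (a : Fin (m+2) → ℂ) : (RR a).natDegree ≤ 2*m+2 := by
  have hP := natDegree_PP_le a
  have hQ := natDegree_QQ_le a
  have hP' : (derivative (PP a)).natDegree ≤ m+1 :=
    le_trans (Polynomial.natDegree_derivative_le _) (by omega)
  have hQ' : (derivative (QQ a)).natDegree ≤ m+1 :=
    le_trans (Polynomial.natDegree_derivative_le _) (by omega)
  rw [Polynomial.natDegree_le_iff_coeff_eq_zero]
  intro N hN
  rcases eq_or_lt_of_le (show 2*m+3 ≤ N by omega) with h | h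
  · subst h
    rw [RR, Polynomial.coeff_sub]
    rw [show 2*m+3 = (m+1)+(m+2) by ring, Polynomial.coeff_mul_add_eq_of_natDegree_le hP' hQ,
      show (m+1)+(m+2) = (m+2)+(m+1) by ring, Polynomial.coeff_mul_add_eq_of_natDegree_le hP hQ',
      Polynomial.coeff_derivative, Polynomial.coeff_derivative]
    ring_nf
  · rw [RR, Polynomial.coeff_sub]
    rw [Polynomial.coeff_eq_zero_of_natDegree_lt, Polynomial.coeff_eq_zero_of_natDegree_lt, sub_zero]
    · exact lt_of_le_of_lt (le_trans (Polynomial.natDegree_mul_le) (by omega)) h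
    · exact lt_of_le_of_lt (le_trans (Polynomial.natDegree_mul_le) (by omega)) h

lemma derivative_finset_prod {ι : Type*} [DecidableEq ι] (s : Finset ι) (f : ι → Polynomial ℂ) :
    derivative (∏ i ∈ s, f i) = ∑ i ∈ s, (∏ j ∈ s.erase i, f j) * derivative (f i) := by
  rw [Finset.prod_eq_multiset_prod, Polynomial.derivative_prod, Finset.sum_eq_multiset_sum]
  congr 1

lemma circle_ne (m : ℕ) (a : Fin (m+2) → ℂ) (ha : ∀ k, ‖a k‖ < 1)
    (z : ℂ) (hz : ‖z‖ = 1) : (RR a).eval z ≠ 0 := by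
  have hzz : z * (starRingEnd ℂ) z = 1 := by
    rw [Complex.mul_conj]
    norm_cast
    rw [Complex.normSq_eq_norm_sq, hz]; norm_num
  have key : ∀ w : ℂ, (w - z) * (1 - (starRingEnd ℂ) w * z)
      = -z * ((Complex.normSq (w - z) : ℂ)) := by
    intro w
    rw [← Complex.mul_conj, map_sub]
    linear_combination (z - w) * hzz
  have hRR : (RR a).eval z = (-z)^(m+1) *
      ((∑ k, (Complex.normSq (a k) - 1) * ∏ j ∈ Finset.univ.erase k, Complex.normSq (a j - z) : ℝ) : ℂ) := by
    rw [RR, PP, QQ, Polynomial.eval_sub, Polynomial.eval_mul, Polynomial.eval_mul,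
      derivative_finset_prod, derivative_finset_prod]
    simp only [Polynomial.eval_finset_sum, Polynomial.eval_prod, Polynomial.eval_mul,
      Polynomial.eval_sub, Polynomial.eval_one, Polynomial.eval_C, Polynomial.eval_X,
      derivative_sub, derivative_C, derivative_X, derivative_one, derivative_mul,
      Polynomial.eval_neg, zero_sub, zero_mul, add_zero, mul_one, zero_add, eval_neg, mul_neg,
      neg_mul, zero_mul]
    rw [Finset.mul_sum, Finset.sum_mul, ← Finset.sum_sub_distrib]
    push_cast
    rw [Finset.mul_sum]
    refine Finset.sum_congr rfl fun k _ => ?_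
    have e1 : ∏ x, (a x - z) = (a k - z) * ∏ x ∈ Finset.univ.erase k, (a x - z) :=
      (Finset.mul_prod_erase _ _ (Finset.mem_univ k)).symm
    have e2 : ∏ x, (1 - (starRingEnd ℂ) (a x) * z)
        = (1 - (starRingEnd ℂ) (a k) * z) * ∏ x ∈ Finset.univ.erase k, (1 - (starRingEnd ℂ) (a x) * z) :=
      (Finset.mul_prod_erase _ _ (Finset.mem_univ k)).symm
    have e4 : (∏ x ∈ Finset.univ.erase k, (a x - z)) * ∏ x ∈ Finset.univ.erase k, (1 - (starRingEnd ℂ) (a x) * z)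
        = (-z)^(m+1) * ∏ x ∈ Finset.univ.erase k, ((Complex.normSq (a x - z) : ℂ)) := by
      rw [← Finset.prod_mul_distrib, Finset.prod_congr rfl (fun j _ => key (a j)),
        Finset.prod_mul_distrib, Finset.prod_const, Finset.card_erase_of_mem (Finset.mem_univ k),
        Finset.card_univ, Fintype.card_fin]
      norm_num
    have e5 : a k * (starRingEnd ℂ) (a k) = ((Complex.normSq (a k) : ℂ)) := Complex.mul_conj _
    rw [e1, e2]
    linear_combination ((starRingEnd ℂ) (a k) * (a k) - 1) * e4
      + ((-z)^(m+1) * ∏ x ∈ Finset.univ.erase k, ((Complex.normSq (a x - z) : ℂ))) * e5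
  rw [hRR]
  have hS : (∑ k, (Complex.normSq (a k) - 1) * ∏ j ∈ Finset.univ.erase k, Complex.normSq (a j - z) : ℝ) < 0 := by
    have := Finset.sum_lt_sum_of_nonempty (s := (Finset.univ : Finset (Fin (m+2))))
      (f := fun k => (Complex.normSq (a k) - 1) * ∏ j ∈ Finset.univ.erase k, Complex.normSq (a j - z))
      (g := fun _ => 0) Finset.univ_nonempty ?_
    · simpa using this
    · intro k _
      apply mul_neg_of_neg_of_pos
      · have : Complex.normSq (a k) < 1 := by
          rw [Complex.normSq_eq_norm_sq]
          nlinarith [ha k, norm_nonneg (a k)]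
        linarith
      · apply Finset.prod_pos
        intro j _
        apply Complex.normSq_pos.mpr
        intro hEq
        rw [sub_eq_zero] at hEq
        have hj := ha j
        rw [hEq, hz] at hj
        exact lt_irrefl _ hj
  apply mul_ne_zero
  · apply pow_ne_zero
    simp only [neg_ne_zero]
    intro h0; rw [h0] at hz; simp at hz
  · exact Complex.ofReal_ne_zero.mpr (ne_of_lt hS)

lemma inv_eval_Pc {n : ℕ} (a : Fin n → ℂ) (z : ℂ) (hz : z ≠ 0) :
    (PP (fun k => (starRingEnd ℂ) (a k))).eval z⁻¹
      = (-1)^n * (z^n)⁻¹ * (QQ a).eval z := by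
  rw [eval_PP, eval_QQ]
  have : ∀ k : Fin n, (starRingEnd ℂ) (a k) - z⁻¹
      = z⁻¹ * ((-1) * (1 - (starRingEnd ℂ) (a k) * z)) := by
    intro k; field_simp
    ring
  rw [Finset.prod_congr rfl (fun k _ => this k), Finset.prod_mul_distrib,
    Finset.prod_mul_distrib, Finset.prod_const, Finset.prod_const]
  simp [inv_pow]
  ring
lemma inv_eval_Qc {n : ℕ} (a : Fin n → ℂ) (z : ℂ) (hz : z ≠ 0) :
    (QQ (fun k => (starRingEnd ℂ) (a k))).eval z⁻¹
      = (-1)^n * (z^n)⁻¹ * (PP a).eval z := by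
  rw [eval_PP, eval_QQ]
  have : ∀ k : Fin n, 1 - (starRingEnd ℂ) ((starRingEnd ℂ) (a k)) * z⁻¹
      = z⁻¹ * ((-1) * (a k - z)) := by
    intro k; rw [Complex.conj_conj]; field_simp
    ring
  rw [Finset.prod_congr rfl (fun k _ => this k), Finset.prod_mul_distrib,
    Finset.prod_mul_distrib, Finset.prod_const, Finset.prod_const]
  simp [inv_pow]
  ring

lemma deriv_transfer (p q : Polynomial ℂ) (n : ℕ)
    (h : ∀ z : ℂ, z ≠ 0 → p.eval z⁻¹ = (-1)^n * (z^n)⁻¹ * q.eval z)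
    (z : ℂ) (hz : z ≠ 0) :
    (derivative p).eval z⁻¹ * (-(z^2)⁻¹)
      = (-1)^n * (-(↑n * z^(n-1)) / (z^n)^2 * q.eval z + (z^n)⁻¹ * (derivative q).eval z) := by
  have hA : HasDerivAt (fun w : ℂ => p.eval w⁻¹) ((derivative p).eval z⁻¹ * (-(z^2)⁻¹)) z :=
    (p.hasDerivAt z⁻¹).comp z (hasDerivAt_inv hz)
  have hB : HasDerivAt (fun w : ℂ => (-1)^n * ((w^n)⁻¹ * q.eval w))
      ((-1)^n * (-(↑n * z^(n-1)) / (z^n)^2 * q.eval z + (z^n)⁻¹ * (derivative q).eval z)) z := by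
    exact (((hasDerivAt_pow n z).inv (pow_ne_zero n hz)).mul (q.hasDerivAt z)).const_mul _
  have hEq : (fun w : ℂ => p.eval w⁻¹) =ᶠ[nhds z] (fun w : ℂ => (-1)^n * ((w^n)⁻¹ * q.eval w)) := by
    filter_upwards [compl_singleton_mem_nhds hz] with w hw
    rw [h w hw]; ring
  exact (hA.congr_of_eventuallyEq hEq.symm).unique hB

lemma RR_inv (m : ℕ) (a : Fin (m+2) → ℂ) (z : ℂ) (hz : z ≠ 0) :
    (RR a).eval z = z^(2*m+2) * (starRingEnd ℂ) ((RR a).eval (((starRingEnd ℂ) z)⁻¹)) := by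
  have hzc : ((starRingEnd ℂ) z)⁻¹ ≠ 0 := by simpa using hz
  have hconj : (starRingEnd ℂ) ((RR a).eval (((starRingEnd ℂ) z)⁻¹))
      = ((RR a).map (starRingEnd ℂ)).eval z⁻¹ := by
    rw [← eval_map_conj (RR a) (((starRingEnd ℂ) z)⁻¹)]
    simp [map_inv₀]
  have hmap : (RR a).map (starRingEnd ℂ) = RR (fun k => (starRingEnd ℂ) (a k)) := by
    simp [RR, Polynomial.map_sub, Polynomial.map_mul, ← Polynomial.derivative_map,
      map_conj_PP, map_conj_QQ]
  rw [hconj, hmap, RR, RR]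
  have h1 := inv_eval_Pc a z hz
  have h2 := inv_eval_Qc a z hz
  have h3 := deriv_transfer _ _ (m+2) (fun w hw => inv_eval_Pc a w hw) z hz
  have h4 := deriv_transfer _ _ (m+2) (fun w hw => inv_eval_Qc a w hw) z hz
  rw [Polynomial.eval_sub, Polynomial.eval_sub, Polynomial.eval_mul, Polynomial.eval_mul,
    Polynomial.eval_mul, Polynomial.eval_mul, h1, h2]
  rcases neg_one_pow_eq_or ℂ (m+2) with he | he <;> rw [he] at h1 h2 h3 h4 ⊢
  · norm_num at h3 h4
    field_simp at h3 h4 ⊢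
    have hA : Polynomial.eval (1/z) (derivative (PP fun k => (starRingEnd ℂ) (a k))) * z^(m+1)
        = ((m:ℂ)+2) * Polynomial.eval z (QQ a) - Polynomial.eval z (derivative (QQ a)) * z := by
      apply mul_left_cancel₀ (pow_ne_zero (m+3) hz)
      linear_combination -h3
    have hB : Polynomial.eval (1/z) (derivative (QQ fun k => (starRingEnd ℂ) (a k))) * z^(m+1)
        = ((m:ℂ)+2) * Polynomial.eval z (PP a) - Polynomial.eval z (derivative (PP a)) * z := by
      apply mul_left_cancel₀ (pow_ne_zero (m+3) hz)
      linear_combination -h4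
    linear_combination (-(z^(m+1) * Polynomial.eval z (PP a))) * hA
      + (z^(m+1) * Polynomial.eval z (QQ a)) * hB
  · norm_num at h3 h4
    field_simp at h3 h4 ⊢
    have hA : Polynomial.eval (1/z) (derivative (PP fun k => (starRingEnd ℂ) (a k))) * z^(m+1)
        = Polynomial.eval z (derivative (QQ a)) * z - ((m:ℂ)+2) * Polynomial.eval z (QQ a) := by
      apply mul_left_cancel₀ (pow_ne_zero (m+3) hz)
      linear_combination -h3
    have hB : Polynomial.eval (1/z) (derivative (QQ fun k => (starRingEnd ℂ) (a k))) * z^(m+1)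
        = Polynomial.eval z (derivative (PP a)) * z - ((m:ℂ)+2) * Polynomial.eval z (PP a) := by
      apply mul_left_cancel₀ (pow_ne_zero (m+3) hz)
      linear_combination -h4
    linear_combination (-z^(m+1)) *
      (Polynomial.eval z (QQ a) * hB - Polynomial.eval z (PP a) * hA)

lemma RR_ne_zero (m : ℕ) (a : Fin (m+2) → ℂ) (ha : ∀ k, ‖a k‖ < 1) :
    RR a ≠ 0 := by
  intro h
  exact circle_ne m a ha 1 (by simp) (by rw [h]; simp)

lemma count_inside (m : ℕ) (a : Fin (m+2) → ℂ) (ha : ∀ k, ‖a k‖ < 1) :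
    (((RR a).roots.filter (fun r => ‖r‖ < 1)).card = m+1) := by
  classical
  have hR0 : RR a ≠ 0 := RR_ne_zero m a ha
  have hnocirc : ∀ r ∈ (RR a).roots, ‖r‖ ≠ 1 := by
    intro r hr h1
    exact circle_ne m a ha r h1 ((Polynomial.mem_roots hR0).mp hr)
  have hcard : (RR a).roots.card = (RR a).natDegree :=
    Polynomial.splits_iff_card_roots.mp (IsAlgClosed.splits _)
  set t : Multiset ℂ := (RR a).roots with ht
  set d : ℕ := t.card with hdd
  have hd : d ≤ 2*m+2 := le_trans (le_of_eq hcard) (natDegree_RR_le m a)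
  set lc : ℂ := (RR a).leadingCoeff with hlc
  have hlc0 : lc ≠ 0 := Polynomial.leadingCoeff_ne_zero.mpr hR0
  have hfact : C lc * (t.map fun r => X - C r).prod = RR a :=
    Polynomial.C_leadingCoeff_mul_prod_multiset_X_sub_C hcard
  set t1 : Multiset ℂ := t.filter (fun r => r ≠ 0) with ht1
  set M : Polynomial ℂ :=
    C ((starRingEnd ℂ) lc) * X^(2*m+2-d) * (t.map fun r => 1 - C ((starRingEnd ℂ) r) * X).prod
    with hM
  have hRM : RR a = M := by
    apply Polynomial.eq_of_infinite_eval_eq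
    apply Set.Infinite.mono _ ((Set.finite_singleton (0:ℂ)).infinite_compl)
    intro z hz
    have hz : z ≠ 0 := hz
    have hzc : (starRingEnd ℂ) z ≠ 0 := by simpa using hz
    simp only [Set.mem_setOf_eq]
    rw [RR_inv m a z hz, ← hfact]
    have hev : ∀ w : ℂ, Polynomial.eval w (C lc * (t.map fun r => X - C r).prod)
        = lc * (t.map fun r => w - r).prod := by
      intro w
      rw [Polynomial.eval_mul, Polynomial.eval_C, Polynomial.eval_multiset_prod,
        Multiset.map_map]
      simp [Function.comp]
    simp only [hev]
    rw [map_mul, ← Multiset.prod_hom _ (starRingEnd ℂ), Multiset.map_map]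
    have hconjmap : (⇑(starRingEnd ℂ) ∘ fun r => ((starRingEnd ℂ) z)⁻¹ - r)
        = fun r : ℂ => z⁻¹ - (starRingEnd ℂ) r := by
      funext r; simp [Function.comp, map_inv₀]
    rw [hconjmap]
    -- now: lc * (t.map fun r => z - r).prod
    --  = z^(2m+2) * (conj lc * (t.map fun r => z⁻¹ - conj r).prod)
    rw [hM]
    rw [Polynomial.eval_mul, Polynomial.eval_mul, Polynomial.eval_C, Polynomial.eval_pow,
      Polynomial.eval_X, Polynomial.eval_multiset_prod, Multiset.map_map]
    have h2 : ((t.map fun r => z⁻¹ - (starRingEnd ℂ) r)).prod * z^d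
        = (t.map fun r => 1 - (starRingEnd ℂ) r * z).prod := by
      have : z^d = (t.map fun _ => z).prod := by
        rw [Multiset.map_const', Multiset.prod_replicate, hdd]
      rw [this, ← Multiset.prod_map_mul]
      apply congrArg
      apply Multiset.map_congr rfl
      intro r _
      field_simp
    have hzpow : (z:ℂ)^(2*m+2) = z^(2*m+2-d) * z^d := by
      rw [← pow_add]
      congr 1
      omega
    calc z ^ (2*m+2) * ((starRingEnd ℂ) lc * ((t.map fun r => z⁻¹ - (starRingEnd ℂ) r)).prod)
        = (starRingEnd ℂ) lc * z^(2*m+2-d) *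
            (((t.map fun r => z⁻¹ - (starRingEnd ℂ) r)).prod * z^d) := by
          rw [hzpow]; ring
      _ = (starRingEnd ℂ) lc * z ^ (2 * m + 2 - d) *
            (Multiset.map (fun x => Polynomial.eval z (1 - C ((starRingEnd ℂ) x) * X)) t).prod := by
          rw [h2]
          congr 1
          exact congrArg Multiset.prod (Multiset.map_congr rfl fun r _ => by simp)
  -- split off zero roots
  have hsplit0 : (t.map fun r => 1 - C ((starRingEnd ℂ) r) * X).prod
      = (t1.map fun r => 1 - C ((starRingEnd ℂ) r) * X).prod := by
    conv_lhs => rw [← Multiset.filter_add_not (fun r => r ≠ 0) t]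
    rw [Multiset.map_add, Multiset.prod_add, ← ht1]
    have h1 : ((t.filter (fun r => ¬ r ≠ 0)).map fun r => 1 - C ((starRingEnd ℂ) r) * X).prod
        = 1 := by
      apply Multiset.prod_eq_one
      intro x hx
      obtain ⟨r, hr, rfl⟩ := Multiset.mem_map.mp hx
      have : r = 0 := not_not.mp (Multiset.mem_filter.mp hr).2
      simp [this]
    rw [h1, mul_one]
  set σ : ℂ → ℂ := fun r => ((starRingEnd ℂ) r)⁻¹ with hσ
  set u : ℂ := (t1.map fun r => -((starRingEnd ℂ) r)).prod with hu
  have hu0 : u ≠ 0 := by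
    apply Multiset.prod_ne_zero
    intro h0
    obtain ⟨r, hr, hr0⟩ := Multiset.mem_map.mp h0
    have : r ≠ 0 := (Multiset.mem_filter.mp (show r ∈ Multiset.filter (fun x : ℂ => x ≠ 0) t by rwa [ht1] at hr)).2
    apply this
    have := neg_eq_zero.mp hr0
    simpa using this
  have hfactor : (t1.map fun r => 1 - C ((starRingEnd ℂ) r) * X).prod
      = C u * ((t1.map σ).map fun s0 => X - C s0).prod := by
    have h1 : ∀ r ∈ t1, (1 - C ((starRingEnd ℂ) r) * X)
        = (-C ((starRingEnd ℂ) r)) * (X - C (((starRingEnd ℂ) r)⁻¹)) := by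
      intro r hr
      have hr0 : r ≠ 0 := (Multiset.mem_filter.mp (show r ∈ Multiset.filter (fun x : ℂ => x ≠ 0) t by rwa [ht1] at hr)).2
      have hc : (starRingEnd ℂ) r ≠ 0 := by simpa using hr0
      rw [mul_sub, neg_mul, neg_mul, sub_neg_eq_add, ← Polynomial.C_mul,
        mul_inv_cancel₀ hc, Polynomial.C_1]
      ring
    rw [Multiset.map_congr rfl h1, Multiset.prod_map_mul]
    congr 1
    · have hmm : (Multiset.map (fun r => -C ((starRingEnd ℂ) r)) t1)
          = Multiset.map (⇑C) (Multiset.map (fun r => -((starRingEnd ℂ) r)) t1) := by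
        rw [Multiset.map_map]
        apply Multiset.map_congr rfl
        intro r _
        simp
      rw [hmm, ← map_multiset_prod (C : ℂ →+* Polynomial ℂ), hu]
    · rw [Multiset.map_map]
      rfl
  set j : ℕ := 2*m+2-d with hj
  have hMN : M = C ((starRingEnd ℂ) lc * u) *
      (((t1.map σ)).map fun s0 => X - C s0).prod * X^j := by
    rw [hM, hsplit0, hfactor, Polynomial.C_mul]
    ring
  have hv0 : (starRingEnd ℂ) lc * u ≠ 0 := mul_ne_zero (by simpa using hlc0) hu0
  have hprodne : (((t1.map σ)).map fun s0 => X - C s0).prod ≠ 0 := by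
    apply Multiset.prod_ne_zero
    intro h0
    obtain ⟨r, hr, hr0⟩ := Multiset.mem_map.mp h0
    exact Polynomial.X_sub_C_ne_zero r hr0
  have hroots : t = (t1.map σ) + Multiset.replicate j 0 := by
    have : t = M.roots := by rw [ht, hRM]
    rw [this, hMN, mul_assoc, Polynomial.roots_C_mul _ hv0,
      Polynomial.roots_mul (mul_ne_zero hprodne (pow_ne_zero j Polynomial.X_ne_zero)),
      Polynomial.roots_multiset_prod_X_sub_C, Polynomial.roots_pow, Polynomial.roots_X,
      Multiset.nsmul_singleton]
  -- counting
  have habs : ∀ r ∈ t1, (‖σ r‖ < 1 ↔ 1 < ‖r‖) := by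
    intro r hr
    have hr0 : r ≠ 0 := (Multiset.mem_filter.mp (show r ∈ Multiset.filter (fun x : ℂ => x ≠ 0) t by rwa [ht1] at hr)).2
    have : ‖σ r‖ = (‖r‖)⁻¹ := by
      simp [hσ, map_inv₀]
    rw [this]
    rw [inv_lt_one_iff₀]
    constructor
    · rintro (h | h)
      · exact absurd (le_antisymm h (norm_nonneg r)) (by simpa using hr0)
      · exact h
    · intro h; right; exact h
  have hcount : (t.filter (fun r => ‖r‖ < 1)).card
      = (t1.filter (fun r => 1 < ‖r‖)).card + j := by
    rw [hroots, Multiset.filter_add, Multiset.card_add]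
    congr 1
    · rw [Multiset.filter_map, Multiset.card_map]
      congr 1
      apply Multiset.filter_congr
      intro r hr
      exact habs r hr
    · rw [Multiset.filter_eq_self.mpr, Multiset.card_replicate]
      intro r hr
      rw [Multiset.eq_of_mem_replicate hr]
      simp
  have ht1eq : (t1.filter (fun r => 1 < ‖r‖)).card
      = (t.filter (fun r => 1 < ‖r‖)).card := by
    rw [ht1, Multiset.filter_filter]
    congr 1
    apply Multiset.filter_congr
    intro r hr
    constructor
    · rintro ⟨h, _⟩; exact h
    · intro h
      refine ⟨h, ?_⟩
      intro h0
      rw [h0] at h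
      simp only [norm_zero] at h
      norm_num at h
  have hsum : (t.filter (fun r => ‖r‖ < 1)).card
      + (t.filter (fun r => 1 < ‖r‖)).card = d := by
    rw [hdd]
    conv_rhs => rw [← Multiset.filter_add_not (fun r => ‖r‖ < 1) t]
    rw [Multiset.card_add]
    congr 1
    apply congrArg
    apply Multiset.filter_congr
    intro r hr
    have hne := hnocirc r hr
    have hiff : (¬ ‖r‖ < 1) ↔ 1 < ‖r‖ := by
      rw [not_lt]
      constructor
      · intro h
        rcases h.lt_or_eq with h' | h'
        · exact h'
        · exact absurd h'.symm hne
      · exact le_of_lt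
    first
    | exact hiff
    | exact hiff.symm
  rw [hcount] at *
  omega


lemma RR_factor (m : ℕ) (a : Fin (m+2) → ℂ) (ha : ∀ k, ‖a k‖ < 1) :
    ∃ tin tout : Multiset ℂ, Multiset.card tin = m+1 ∧
      (∀ r ∈ tin, ‖r‖ < 1) ∧ (∀ r ∈ tout, ¬ ‖r‖ < 1) ∧
      ∀ z : ℂ, (RR a).eval z = (RR a).leadingCoeff *
        ((tin.map fun r => z - r).prod * (tout.map fun r => z - r).prod) := by
  classical
  have hR0 : RR a ≠ 0 := RR_ne_zero m a ha
  have hcard : (RR a).roots.card = (RR a).natDegree :=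
    Polynomial.splits_iff_card_roots.mp (IsAlgClosed.splits _)
  have hfact : C (RR a).leadingCoeff * ((RR a).roots.map fun r => X - C r).prod = RR a :=
    Polynomial.C_leadingCoeff_mul_prod_multiset_X_sub_C hcard
  refine ⟨(RR a).roots.filter (fun r => ‖r‖ < 1),
    (RR a).roots.filter (fun r => ¬ ‖r‖ < 1),
    count_inside m a ha, fun r hr => (Multiset.mem_filter.mp hr).2,
    fun r hr => (Multiset.mem_filter.mp hr).2, fun z => ?_⟩
  conv_lhs => rw [← hfact]
  rw [Polynomial.eval_mul, Polynomial.eval_C, Polynomial.eval_multiset_prod, Multiset.map_map]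
  congr 1
  conv_lhs => rw [← Multiset.filter_add_not (fun r => ‖r‖ < 1) (RR a).roots]
  rw [Multiset.map_add, Multiset.prod_add]
  congr 1 <;>
  · apply congrArg
    apply Multiset.map_congr rfl
    intro r _
    simp

theorem main
    (n : ℕ) (hn : 2 ≤ n) (c : ℂ) (hc : ‖c‖ = 1)
    (a : Fin n → ℂ) (ha : ∀ k, a k ∈ ball (0:ℂ) 1) (B : ℂ → ℂ)
    (hB : ∀ z ∈ ball (0:ℂ) 1,
      B z = c * ∏ k, (a k - z) / (1 - (starRingEnd ℂ) (a k) * z)) :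
    ∃ (w : Fin (n-1) → ℂ) (g : ℂ → ℂ),
      (∀ i, w i ∈ ball (0:ℂ) 1) ∧
      DifferentiableOn ℂ g (ball (0:ℂ) 1) ∧
      (∀ z ∈ ball (0:ℂ) 1, g z ≠ 0) ∧
      (∀ z ∈ ball (0:ℂ) 1, deriv B z = (∏ i, (z - w i)) * g z) := by
  classical
  obtain ⟨m, rfl⟩ : ∃ m, n = m + 2 := ⟨n - 2, by omega⟩
  have ha' : ∀ k, ‖a k‖ < 1 := by
    intro k
    have := ha k
    rwa [mem_ball_zero_iff] at this
  have habs : ∀ z : ℂ, z ∈ ball (0:ℂ) 1 → ‖z‖ < 1 := by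
    intro z hz
    rwa [mem_ball_zero_iff] at hz
  have hc0 : c ≠ 0 := by
    intro h; rw [h] at hc; simp at hc
  have hQne : ∀ z ∈ ball (0:ℂ) 1, (QQ a).eval z ≠ 0 := by
    intro z hz
    rw [eval_QQ]
    apply Finset.prod_ne_zero_iff.mpr
    intro k _
    intro h0
    have h1 : (starRingEnd ℂ) (a k) * z = 1 := by linear_combination -h0
    have := congrArg norm h1
    rw [norm_mul, Complex.norm_conj, norm_one] at this
    nlinarith [ha' k, habs z hz, norm_nonneg (a k), norm_nonneg z]
  have hderiv : ∀ z ∈ ball (0:ℂ) 1,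
      deriv B z = c * (RR a).eval z / ((QQ a).eval z)^2 := by
    intro z hz
    have hF : ∀ w ∈ ball (0:ℂ) 1, B w = c * (PP a).eval w / (QQ a).eval w := by
      intro w hw
      rw [hB w hw, eval_PP, eval_QQ, mul_div_assoc, ← Finset.prod_div_distrib]
    have hHD : HasDerivAt (fun w => c * (PP a).eval w / (QQ a).eval w)
        ((c * (derivative (PP a)).eval z * (QQ a).eval z
          - c * (PP a).eval z * (derivative (QQ a)).eval z) / ((QQ a).eval z)^2) z :=
      (((PP a).hasDerivAt z).const_mul c).div ((QQ a).hasDerivAt z) (hQne z hz)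
    have hev : B =ᶠ[nhds z] (fun w => c * (PP a).eval w / (QQ a).eval w) := by
      filter_upwards [isOpen_ball.mem_nhds hz] with w hw
      exact hF w hw
    rw [hev.deriv_eq, hHD.deriv, RR, Polynomial.eval_sub, Polynomial.eval_mul,
      Polynomial.eval_mul]
    ring
  obtain ⟨tin, tout, htin, hin, hout, heval⟩ := RR_factor m a ha'
  set lc : ℂ := (RR a).leadingCoeff with hlc
  have hlc0 : lc ≠ 0 := Polynomial.leadingCoeff_ne_zero.mpr (RR_ne_zero m a ha')
  set l : List ℂ := tin.toList with hl
  have hlen : l.length = m + 1 := by rw [hl, Multiset.length_toList, htin]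
  have hlen' : m + 2 - 1 = l.length := by omega
  refine ⟨fun i => l.get (Fin.cast hlen' i),
    fun z => c * lc * (tout.map fun r => z - r).prod / ((QQ a).eval z)^2, ?_, ?_, ?_, ?_⟩
  · intro i
    have hmem : l.get (Fin.cast hlen' i) ∈ tin := by
      rw [← Multiset.mem_toList]
      exact List.get_mem l (Fin.cast hlen' i)
    rw [mem_ball_zero_iff]
    exact hin _ hmem
  · apply DifferentiableOn.div
    · apply Differentiable.differentiableOn
      have : ∀ z : ℂ, (tout.map fun r => z - r).prod
          = Polynomial.eval z ((tout.map fun r => X - C r).prod) := by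
        intro z
        rw [Polynomial.eval_multiset_prod, Multiset.map_map]
        apply congrArg
        apply Multiset.map_congr rfl
        intro r _
        simp
      have : (fun z => c * lc * (tout.map fun r => z - r).prod)
          = fun z => Polynomial.eval z (C (c * lc) * (tout.map fun r => X - C r).prod) := by
        funext z
        rw [Polynomial.eval_mul, Polynomial.eval_C, this]
      rw [this]
      exact (C (c * lc) * (tout.map fun r => X - C r).prod).differentiable
    · apply Differentiable.differentiableOn
      apply Differentiable.pow
      exact (QQ a).differentiable
    · intro z hz
      exact pow_ne_zero 2 (hQne z hz)
  · intro z hz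
    apply div_ne_zero
    · apply mul_ne_zero (mul_ne_zero hc0 hlc0)
      apply Multiset.prod_ne_zero
      intro h0
      obtain ⟨r, hr, hr0⟩ := Multiset.mem_map.mp h0
      have h1 : z = r := by linear_combination hr0
      apply hout r hr
      rw [← h1]
      exact habs z hz
    · exact pow_ne_zero 2 (hQne z hz)
  · intro z hz
    rw [hderiv z hz, heval z]
    have hpr : (∏ i : Fin (m+2-1), (z - l.get (Fin.cast hlen' i)))
        = (tin.map fun r => z - r).prod := by
      have h1 : tin = (↑l : Multiset ℂ) := (Multiset.coe_toList tin).symm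
      rw [h1, Multiset.map_coe, Multiset.prod_coe]
      have h2 : l.map (fun r => z - r) = List.ofFn ((fun r => z - r) ∘ l.get) := by
        conv_lhs => rw [← List.ofFn_get l]
        rw [List.map_ofFn]
      rw [h2, List.prod_ofFn]
      exact Fintype.prod_equiv (finCongr hlen') _ _ (fun i => rfl)
    rw [← hpr]
    ring

end Bochner

theorem bochner_disk_part
    (n : ℕ) (hn : 2 ≤ n) (c : ℂ) (hc : ‖c‖ = 1)
    (a : Fin n → ℂ) (ha : ∀ k, a k ∈ ball (0:ℂ) 1) (B : ℂ → ℂ)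
    (hB : ∀ z ∈ ball (0:ℂ) 1,
      B z = c * ∏ k, (a k - z) / (1 - (starRingEnd ℂ) (a k) * z)) :
    ∃ (w : Fin (n-1) → ℂ) (g : ℂ → ℂ),
      (∀ i, w i ∈ ball (0:ℂ) 1) ∧
      DifferentiableOn ℂ g (ball (0:ℂ) 1) ∧
      (∀ z ∈ ball (0:ℂ) 1, g z ≠ 0) ∧
      (∀ z ∈ ball (0:ℂ) 1, deriv B z = (∏ i, (z - w i)) * g z) := by
  exact Bochner.main n hn c hc a ha B hB
end

section
/- Let B be a finite Blaschke product, and fix a point z₀ ∈ D lying outside the closed disk containing all zeros of B, namely with |z₀| ≥ t₀ := max{|z| : B(z) = 0} and let t₁ = max{|B(z)| : |z| ≤ t₀}. Then for any t with t₁ < t < 1, the set {z ∈ D : |B(z)| < t} is connected; it equals the unique component containing all the zeros of B. -/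
open Metric

lemma blaschke_den_lb (a z : ℂ) :
    1 - ‖a‖ * ‖z‖ ≤ ‖1 - (starRingEnd ℂ) a * z‖ := by
  have h := norm_sub_norm_le (1:ℂ) ((starRingEnd ℂ) a * z)
  simpa [norm_mul, Complex.norm_conj] using h

lemma blaschke_identity (a z : ℂ) :
    ‖1 - (starRingEnd ℂ) a * z‖ ^ 2
      = ‖a - z‖ ^ 2
        + (1 - ‖a‖ ^ 2) * (1 - ‖z‖ ^ 2) := by
  simp only [Complex.sq_norm]
  simp only [Complex.normSq_apply, Complex.sub_re, Complex.sub_im, Complex.mul_re,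
    Complex.mul_im, Complex.one_re, Complex.one_im, Complex.conj_re, Complex.conj_im]
  ring

lemma blaschke_factor_sq (t₀ : ℝ) (ht₀0 : 0 ≤ t₀) (ht₀1 : t₀ < 1) (a z : ℂ)
    (ha : ‖a‖ ≤ t₀) (hz : ‖z‖ < 1) :
    1 - (1 + t₀) / (1 - t₀) * (1 - ‖z‖ ^ 2)
      ≤ ‖(a - z) / (1 - (starRingEnd ℂ) a * z)‖ ^ 2 := by
  set s := ‖a‖ with hs
  set u := ‖z‖ with hu
  have hs0 : 0 ≤ s := norm_nonneg a
  have hu0 : 0 ≤ u := norm_nonneg z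
  set D := ‖1 - (starRingEnd ℂ) a * z‖ with hD
  have hD1 : 1 - s * u ≤ D := blaschke_den_lb a z
  have hDpos : 0 < D := by nlinarith
  have hid : D ^ 2 = ‖a - z‖ ^ 2 + (1 - s ^ 2) * (1 - u ^ 2) :=
    blaschke_identity a z
  have habs : ‖(a - z) / (1 - (starRingEnd ℂ) a * z)‖ ^ 2
      = ‖a - z‖ ^ 2 / D ^ 2 := by
    rw [norm_div, div_pow]
  rw [habs, le_div_iff₀ (pow_pos hDpos 2)]
  have hDs : 1 - s ≤ D := by nlinarith
  have hsq : (1 - s) ^ 2 ≤ D ^ 2 := by nlinarith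
  have key : (1 - s ^ 2) * (1 - u ^ 2) ≤ (1 + t₀) / (1 - t₀) * (1 - u ^ 2) * D ^ 2 := by
    rw [div_mul_eq_mul_div, div_mul_eq_mul_div, le_div_iff₀ (by linarith)]
    nlinarith [mul_nonneg (mul_nonneg (by linarith : (0:ℝ) ≤ 1 + t₀)
        (by nlinarith : (0:ℝ) ≤ 1 - u ^ 2)) (sub_nonneg.mpr hsq),
      mul_nonneg (mul_nonneg (by linarith : (0:ℝ) ≤ 1 - s)
        (by linarith : (0:ℝ) ≤ t₀ - s)) (by nlinarith : (0:ℝ) ≤ 1 - u ^ 2)]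
  nlinarith [key, hid]

theorem sublevel_set_connected
    (n : ℕ) (hn : 1 ≤ n) (c : ℂ) (hc : ‖c‖ = 1)
    (a : Fin n → ℂ) (ha : ∀ k, a k ∈ ball (0:ℂ) 1) (B : ℂ → ℂ)
    (hB : ∀ z ∈ ball (0:ℂ) 1,
      B z = c * ∏ k, (a k - z) / (1 - (starRingEnd ℂ) (a k) * z))
    (t₀ : ℝ) (ht₀ : ∀ k, ‖a k‖ ≤ t₀) (ht₀1 : t₀ < 1)
    (t₁ : ℝ)
    (ht₁ : IsGreatest {y : ℝ | ∃ z : ℂ, ‖z‖ ≤ t₀ ∧ y = ‖B z‖} t₁)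
    (t : ℝ) (ht : t₁ < t) (ht1 : t < 1) :
    IsConnected {z : ℂ | z ∈ ball (0:ℂ) 1 ∧ ‖B z‖ < t} := by
  set f : ℂ → ℂ := fun z => c * ∏ k, (a k - z) / (1 - (starRingEnd ℂ) (a k) * z) with hf
  -- basic positivity facts
  have ht₀0 : 0 ≤ t₀ := le_trans (norm_nonneg _) (ht₀ ⟨0, hn⟩)
  have ht₁0 : 0 ≤ t₁ := by
    obtain ⟨z, _, hz⟩ := ht₁.1
    rw [hz]; exact norm_nonneg _
  have ht0 : 0 < t := lt_of_le_of_lt ht₁0 ht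
  have hc0 : c ≠ 0 := by
    intro h; rw [h] at hc; simp at hc
  -- rewrite the set in terms of f
  have hset : {z : ℂ | z ∈ ball (0:ℂ) 1 ∧ ‖B z‖ < t}
      = {z : ℂ | ‖z‖ < 1 ∧ ‖f z‖ < t} := by
    ext z
    simp only [Set.mem_setOf_eq, mem_ball_zero_iff]
    have hfz : ‖z‖ < 1 → f z = B z := by
      intro h1
      exact (hB z (by rwa [mem_ball_zero_iff])).symm
    constructor
    · rintro ⟨h1, h2⟩
      exact ⟨h1, by rwa [hfz h1]⟩
    · rintro ⟨h1, h2⟩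
      exact ⟨h1, by rwa [← hfz h1]⟩
  rw [hset]
  set S : Set ℂ := {z : ℂ | ‖z‖ < 1 ∧ ‖f z‖ < t} with hSdef
  -- denominators are nonzero
  have hden : ∀ (k : Fin n) (z : ℂ), ‖z‖ < 1 →
      1 - (starRingEnd ℂ) (a k) * z ≠ 0 := by
    intro k z hz h
    have hlt : ‖a k‖ * ‖z‖ < 1 := by
      have hak : ‖a k‖ < 1 := by
        simpa [mem_ball_zero_iff] using ha k
      have := mul_le_mul_of_nonneg_left hz.le (norm_nonneg (a k))
      nlinarith [norm_nonneg (a k), norm_nonneg z]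
    have := blaschke_den_lb (a k) z
    rw [h] at this
    simp at this
    linarith
  -- f is differentiable on the unit ball
  have hdiff : ∀ z : ℂ, ‖z‖ < 1 → DifferentiableAt ℂ f z := by
    intro z hz
    apply DifferentiableAt.const_mul
    apply DifferentiableAt.fun_finsetProd
    intro k _
    exact ((differentiableAt_const _).sub differentiableAt_id).div
      ((differentiableAt_const _).sub ((differentiableAt_const _).mul differentiableAt_id))
      (hden k z hz)
  have hcont : ∀ z : ℂ, ‖z‖ < 1 → ContinuousAt f z :=
    fun z hz => (hdiff z hz).continuousAt
  -- S is open
  have hopen : IsOpen S := by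
    rw [isOpen_iff_mem_nhds]
    intro z hz
    have h1 : {w : ℂ | ‖w‖ < 1} ∈ nhds z :=
      (isOpen_lt continuous_norm continuous_const).mem_nhds hz.1
    have h2 : {w : ℂ | ‖f w‖ < t} ∈ nhds z := by
      have hcz : ContinuousAt (fun w => ‖f w‖) z :=
        continuous_norm.continuousAt.comp (hcont z hz.1)
      exact hcz.preimage_mem_nhds (Iio_mem_nhds hz.2)
    exact Filter.inter_mem h1 h2
  -- zeros of f in the ball are the a k
  have hzero : ∀ z : ℂ, ‖z‖ < 1 → f z = 0 → ∃ k, z = a k := by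
    intro z hz h0
    rw [hf] at h0
    simp only [mul_eq_zero] at h0
    rcases h0 with h0 | h0
    · exact absurd h0 hc0
    · rw [Finset.prod_eq_zero_iff] at h0
      obtain ⟨k, _, hk⟩ := h0
      rw [div_eq_zero_iff] at hk
      rcases hk with hk | hk
      · exact ⟨k, by linear_combination -hk⟩
      · exact absurd hk (hden k z hz)
  -- the closed ball of radius t₀ is inside S
  have hK : closedBall (0:ℂ) t₀ ⊆ S := by
    intro z hz
    rw [mem_closedBall_zero_iff] at hz
    have hz1 : ‖z‖ < 1 := lt_of_le_of_lt hz ht₀1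
    have hmem : z ∈ ball (0:ℂ) 1 := by
      rwa [mem_ball_zero_iff]
    refine ⟨hz1, ?_⟩
    have : ‖B z‖ ≤ t₁ := ht₁.2 ⟨z, hz, rfl⟩
    rw [hB z hmem] at this
    exact lt_of_le_of_lt this ht
  -- exterior estimate: there is r < 1 so that S ⊆ ball 0 r
  obtain ⟨r, hr0, hr1, hrS⟩ : ∃ r : ℝ, 0 ≤ r ∧ r < 1 ∧
      ∀ z : ℂ, ‖z‖ < 1 → r ≤ ‖z‖ → t ≤ ‖f z‖ := by
    set m : ℝ := t ^ ((n : ℝ)⁻¹) with hm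
    have hm0 : 0 < m := Real.rpow_pos_of_pos ht0 _
    have hm1 : m < 1 := by
      apply Real.rpow_lt_one ht0.le ht1
      positivity
    have hmn : m ^ n = t := by
      rw [hm, ← Real.rpow_natCast (t ^ ((n:ℝ)⁻¹)) n, ← Real.rpow_mul ht0.le]
      rw [inv_mul_cancel₀ (by exact_mod_cast Nat.pos_of_ne_zero (by omega) |>.ne'), Real.rpow_one]
    set C : ℝ := (1 + t₀) / (1 - t₀) with hC
    have hCpos : 0 < C := by
      apply div_pos <;> linarith
    set q : ℝ := max (1 - (1 - m) / C) 0 with hq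
    have hq1 : q < 1 := by
      apply max_lt _ one_pos
      have : 0 < (1 - m) / C := div_pos (by linarith) hCpos
      linarith
    refine ⟨Real.sqrt q, Real.sqrt_nonneg q, ?_, ?_⟩
    · rw [show (1:ℝ) = Real.sqrt 1 by simp]
      exact Real.sqrt_lt_sqrt (le_max_right _ _) hq1
    · intro z hz1 hzr
      have hq0 : (0:ℝ) ≤ q := le_max_right _ _
      have hzq : q ≤ ‖z‖ ^ 2 := by
        have h1 : Real.sqrt q ^ 2 ≤ ‖z‖ ^ 2 :=
          pow_le_pow_left₀ (Real.sqrt_nonneg q) hzr 2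
        rwa [Real.sq_sqrt hq0] at h1
      have hfac : ∀ k : Fin n, m ≤ ‖(a k - z) /
          (1 - (starRingEnd ℂ) (a k) * z)‖ ^ 2 := by
        intro k
        have h1 := blaschke_factor_sq t₀ ht₀0 ht₀1 (a k) z (ht₀ k) hz1
        have h2 : 1 - C * (1 - ‖z‖ ^ 2) ≥ m := by
          have hq2 : 1 - (1 - m) / C ≤ ‖z‖ ^ 2 :=
            le_trans (le_max_left _ _) hzq
          have : C * (1 - ‖z‖ ^ 2) ≤ C * ((1 - m) / C) :=
            mul_le_mul_of_nonneg_left (by linarith) hCpos.le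
          rw [mul_div_cancel₀ _ hCpos.ne'] at this
          linarith
        exact le_trans h2 h1
      have hf2 : t ≤ ‖f z‖ ^ 2 := by
        have hprod : m ^ n ≤ ∏ k : Fin n, ‖(a k - z) /
            (1 - (starRingEnd ℂ) (a k) * z)‖ ^ 2 := by
          calc m ^ n = ∏ _k : Fin n, m := by rw [Finset.prod_const, Finset.card_univ,
                Fintype.card_fin]
            _ ≤ _ := Finset.prod_le_prod (fun k _ => hm0.le) (fun k _ => hfac k)
        rw [hmn] at hprod
        have : ‖f z‖ ^ 2 = ∏ k : Fin n, ‖(a k - z) /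
            (1 - (starRingEnd ℂ) (a k) * z)‖ ^ 2 := by
          rw [hf]
          simp only [norm_mul, hc, one_mul, norm_prod]
          rw [← Finset.prod_pow]
        rw [this]
        exact hprod
      nlinarith [norm_nonneg (f z)]
  have hSr : S ⊆ ball (0:ℂ) r := by
    intro z hz
    rw [mem_ball_zero_iff]
    by_contra h
    push_neg at h
    exact absurd hz.2 (not_lt.mpr (hrS z hz.1 h))
  have hclS : closure S ⊆ closedBall (0:ℂ) r :=
    (closure_mono hSr).trans closure_ball_subset_closedBall
  have hclS1 : ∀ x ∈ closure S, ‖x‖ < 1 := by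
    intro x hx
    have := hclS hx
    rw [mem_closedBall_zero_iff] at this
    linarith
  -- every connected component of S meets some zero of f
  have hcomp_zero : ∀ z ∈ S, ∃ k, a k ∈ connectedComponentIn S z := by
    intro z hz
    by_contra hno
    push_neg at hno
    set V : Set ℂ := connectedComponentIn S z with hV
    have hVS : V ⊆ S := connectedComponentIn_subset S z
    have hVopen : IsOpen V := hopen.connectedComponentIn
    have hVbdd : Bornology.IsBounded V :=
      (isBounded_ball.subset (hVS.trans hSr))
    -- frontier of V is disjoint from S
    have hfrS : ∀ x ∈ frontier V, x ∉ S := by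
      intro x hx hxS
      have hx2 : x ∉ V := by
        rw [hVopen.frontier_eq] at hx
        exact hx.2
      apply hx2
      have hnx : connectedComponentIn S x ∈ nhds x :=
        (hopen.connectedComponentIn).mem_nhds (mem_connectedComponentIn hxS)
      have hxcl : x ∈ closure V := frontier_subset_closure hx
      obtain ⟨y, hy1, hy2⟩ := mem_closure_iff_nhds.mp hxcl _ hnx
      have e1 : connectedComponentIn S x = connectedComponentIn S y :=
        connectedComponentIn_eq hy1
      have e2 : connectedComponentIn S z = connectedComponentIn S y :=
        connectedComponentIn_eq hy2
      rw [hV, e2, ← e1]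
      exact mem_connectedComponentIn hxS
    have hclV : closure V ⊆ closure S := closure_mono hVS
    have hclV1 : ∀ x ∈ closure V, ‖x‖ < 1 :=
      fun x hx => hclS1 x (hclV hx)
    -- on the frontier, t ≤ |f|
    have hfrt : ∀ x ∈ frontier V, t ≤ ‖f x‖ := by
      intro x hx
      have hx1 : ‖x‖ < 1 := hclV1 x (frontier_subset_closure hx)
      by_contra hlt
      push_neg at hlt
      exact hfrS x hx ⟨hx1, hlt⟩
    -- f is nonzero on the closure of V
    have hfne : ∀ x ∈ closure V, f x ≠ 0 := by
      intro x hx h0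
      rw [closure_eq_self_union_frontier] at hx
      rcases hx with hx | hx
      · obtain ⟨k, hk⟩ := hzero x ((hVS hx).1) h0
        exact hno k (hk ▸ hx)
      · have := hfrt x hx
        rw [h0] at this
        simp at this
        linarith
    -- minimum modulus principle via 1/f
    have hdc : DiffContOnCl ℂ (fun w => (f w)⁻¹) V := by
      constructor
      · intro x hx
        exact ((hdiff x ((hVS hx).1)).inv
          (hfne x (subset_closure hx))).differentiableWithinAt
      · intro x hx
        exact (((hcont x (hclV1 x hx)).inv₀ (hfne x hx))).continuousWithinAt
    have hbound : ∀ x ∈ frontier V, ‖(f x)⁻¹‖ ≤ t⁻¹ := by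
      intro x hx
      rw [norm_inv]
      exact inv_anti₀ ht0 (hfrt x hx)
    have hzcl : z ∈ closure V := subset_closure (mem_connectedComponentIn hz)
    have := Complex.norm_le_of_forall_mem_frontier_norm_le hVbdd hdc hbound hzcl
    rw [norm_inv] at this
    have hfz0 : 0 < ‖f z‖ := norm_pos_iff.mpr (hfne z hzcl)
    have : t ≤ ‖f z‖ := by
      rwa [inv_le_inv₀ hfz0 ht0] at this
    exact absurd hz.2 (not_lt.mpr this)
  -- conclude: every component contains 0
  have h0S : (0:ℂ) ∈ S := hK (mem_closedBall_self ht₀0)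
  have hKpre : IsPreconnected (closedBall (0:ℂ) t₀) :=
    (convex_closedBall (0:ℂ) t₀).isPreconnected
  have hcomp0 : ∀ z ∈ S, z ∈ connectedComponentIn S 0 := by
    intro z hz
    obtain ⟨k, hk⟩ := hcomp_zero z hz
    have hak : a k ∈ closedBall (0:ℂ) t₀ := by
      rw [mem_closedBall_zero_iff]
      exact ht₀ k
    have hsub : closedBall (0:ℂ) t₀ ⊆ connectedComponentIn S (a k) :=
      hKpre.subset_connectedComponentIn hak hK
    have h0k : (0:ℂ) ∈ connectedComponentIn S (a k) :=
      hsub (mem_closedBall_self ht₀0)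
    have e1 : connectedComponentIn S z = connectedComponentIn S (a k) :=
      connectedComponentIn_eq hk
    have e2 : connectedComponentIn S (a k) = connectedComponentIn S 0 :=
      connectedComponentIn_eq h0k
    rw [← e2, ← e1]
    exact mem_connectedComponentIn hz
  have hSeq : S = connectedComponentIn S 0 :=
    le_antisymm hcomp0 (connectedComponentIn_subset S 0)
  rw [hSeq]
  exact (isConnected_connectedComponentIn_iff).mpr h0S
end

section
/- Let ρ(z) = ξz where ξ is a primitive n-th root of unity, and let B be a Blaschke product with simple zeros satisfying B∘ρ = B. Then the zero set of B is invariant under multiplication by ξ, and there is a Blaschke product B₁ and a unimodular constant c such that B(z) = c·B₁(z^n) for all z ∈ D. -/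
open Metric Filter Topology

/-- A normalized Blaschke factor with zero `a`. -/
noncomputable def blaschkeFactor (a w : ℂ) : ℂ :=
  ((‖a‖ : ℂ) / a) * ((a - w) / (1 - (starRingEnd ℂ) a * w))

lemma prod_sub_pow {n : ℕ} {ξ : ℂ} (hξ : IsPrimitiveRoot ξ n) (hn : 0 < n) (x y : ℂ) :
    ∏ m ∈ Finset.range n, (x - ξ ^ m * y) = x ^ n - y ^ n := by
  have h := X_pow_sub_C_eq_prod hξ hn (rfl : y ^ n = y ^ n)
  have h2 := congrArg (Polynomial.eval x) h
  simpa [Polynomial.eval_prod] using h2.symm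

lemma prod_pow_roots {n : ℕ} {ξ : ℂ} (hξ : IsPrimitiveRoot ξ n) (hn : 0 < n) :
    ∏ m ∈ Finset.range n, ξ ^ m = (-1 : ℂ) ^ (n - 1) := by
  have h := prod_sub_pow hξ hn 0 1
  have h' : ∏ m ∈ Finset.range n, (0 - ξ ^ m * 1) = (-1:ℂ)^n * ∏ m ∈ Finset.range n, ξ ^ m := by
    calc ∏ m ∈ Finset.range n, (0 - ξ ^ m * 1)
        = ∏ m ∈ Finset.range n, ((-1) * ξ ^ m) := Finset.prod_congr rfl fun m _ => by ring
      _ = (∏ _m ∈ Finset.range n, (-1:ℂ)) * ∏ m ∈ Finset.range n, ξ ^ m :=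
          Finset.prod_mul_distrib
      _ = (-1:ℂ)^n * ∏ m ∈ Finset.range n, ξ ^ m := by
          rw [Finset.prod_const, Finset.card_range]
  rw [h', zero_pow hn.ne', one_pow, zero_sub] at h
  have hodd : Odd (n + (n - 1)) := ⟨n - 1, by omega⟩
  have key : (-1:ℂ)^n * ((-1:ℂ)^(n-1)) = -1 := by
    rw [← pow_add]; exact hodd.neg_one_pow
  have hne : ((-1 : ℂ) ^ n) ≠ 0 := by
    simp [pow_ne_zero]
  apply mul_left_cancel₀ hne
  rw [h, key]

lemma abs_of_primitive {n : ℕ} {ξ : ℂ} (hξ : IsPrimitiveRoot ξ n) (hn : 0 < n) :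
    ‖ξ‖ = 1 := by
  have h := congrArg norm hξ.pow_eq_one
  rw [norm_pow, norm_one] at h
  rcases lt_trichotomy (‖ξ‖) 1 with hlt | heq | hgt
  · have := pow_lt_one₀ (norm_nonneg ξ) hlt hn.ne'
    rw [h] at this; exact absurd this (lt_irrefl 1)
  · exact heq
  · have := one_lt_pow₀ hgt hn.ne'
    rw [h] at this; exact absurd this (lt_irrefl 1)

lemma orbit_prod {n : ℕ} {ξ : ℂ} (hξ : IsPrimitiveRoot ξ n) (hn : 0 < n)
    {a u : ℂ} (ha0 : a ≠ 0) (ha : ‖a‖ < 1) (hu : ‖u‖ < 1) :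
    ∏ m ∈ Finset.range n, blaschkeFactor (ξ ^ m * a) u = blaschkeFactor (a ^ n) (u ^ n) := by
  have hξa : ‖ξ‖ = 1 := abs_of_primitive hξ hn
  have hξ0 : ξ ≠ 0 := fun h => by simp [h] at hξa
  have hξ' : IsPrimitiveRoot ((starRingEnd ℂ) ξ) n :=
    hξ.map_of_injective (starRingEnd ℂ).injective
  have hd : (1 : ℂ) - (starRingEnd ℂ) (a ^ n) * u ^ n ≠ 0 := by
    intro h
    have h2 : (starRingEnd ℂ) (a ^ n) * u ^ n = 1 := by linear_combination -h
    have := congrArg norm h2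
    rw [norm_mul, Complex.norm_conj, norm_one, norm_pow, norm_pow] at this
    nlinarith [pow_le_one₀ (norm_nonneg a) ha.le (n := n),
      pow_lt_one₀ (norm_nonneg u) hu hn.ne',
      pow_nonneg (norm_nonneg a) n, pow_nonneg (norm_nonneg u) n]
  have han : (a : ℂ) ^ n ≠ 0 := pow_ne_zero _ ha0
  -- rewrite each factor
  have hfac : ∀ m, blaschkeFactor (ξ ^ m * a) u =
      ((‖a‖ : ℂ) / (ξ ^ m * a)) *
        ((ξ ^ m * a - u) / (1 - ((starRingEnd ℂ) ξ) ^ m * ((starRingEnd ℂ) a * u))) := by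
    intro m
    unfold blaschkeFactor
    rw [norm_mul, norm_pow, hξa, one_pow, one_mul, map_mul, map_pow]
    ring_nf
  calc ∏ m ∈ Finset.range n, blaschkeFactor (ξ ^ m * a) u
      = ∏ m ∈ Finset.range n, (((‖a‖ : ℂ) / (ξ ^ m * a)) *
          ((ξ ^ m * a - u) / (1 - ((starRingEnd ℂ) ξ) ^ m * ((starRingEnd ℂ) a * u)))) :=
        Finset.prod_congr rfl fun m _ => hfac m
    _ = ((∏ _m ∈ Finset.range n, (‖a‖ : ℂ)) / (∏ m ∈ Finset.range n, (ξ ^ m * a))) *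
          ((∏ m ∈ Finset.range n, (ξ ^ m * a - u)) /
            (∏ m ∈ Finset.range n, (1 - ((starRingEnd ℂ) ξ) ^ m * ((starRingEnd ℂ) a * u)))) := by
        rw [Finset.prod_mul_distrib, Finset.prod_div_distrib, Finset.prod_div_distrib]
    _ = blaschkeFactor (a ^ n) (u ^ n) := by
        have e1 : ∏ m ∈ Finset.range n, (ξ ^ m * a) = (-1:ℂ)^(n-1) * a ^ n := by
          rw [Finset.prod_mul_distrib, prod_pow_roots hξ hn, Finset.prod_const, Finset.card_range]
        have e2 : ∏ m ∈ Finset.range n, (ξ ^ m * a - u) = (-1:ℂ)^n * (u ^ n - a ^ n) := by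
          have : ∀ m, ξ ^ m * a - u = -(u - ξ ^ m * a) := fun m => by ring
          rw [Finset.prod_congr rfl fun m _ => this m]
          calc ∏ m ∈ Finset.range n, -(u - ξ ^ m * a)
              = ∏ m ∈ Finset.range n, ((-1) * (u - ξ ^ m * a)) :=
                Finset.prod_congr rfl fun m _ => by ring
            _ = (∏ _m ∈ Finset.range n, (-1:ℂ)) * ∏ m ∈ Finset.range n, (u - ξ ^ m * a) :=
                Finset.prod_mul_distrib
            _ = (-1:ℂ)^n * (u ^ n - a ^ n) := by
                rw [Finset.prod_const, Finset.card_range, prod_sub_pow hξ hn]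
        have e3 : ∏ m ∈ Finset.range n, (1 - ((starRingEnd ℂ) ξ) ^ m * ((starRingEnd ℂ) a * u))
            = 1 - (starRingEnd ℂ) (a ^ n) * u ^ n := by
          rw [prod_sub_pow hξ' hn 1 ((starRingEnd ℂ) a * u), one_pow, mul_pow, map_pow]
        have e4 : ∏ _m ∈ Finset.range n, (‖a‖ : ℂ)
            = (‖a ^ n‖ : ℂ) := by
          rw [Finset.prod_const, Finset.card_range, norm_pow]
          push_cast
          ring
        rw [e1, e2, e3, e4]
        unfold blaschkeFactor
        have hsgn : (-1:ℂ)^n = (-1:ℂ)^(n-1) * (-1) := by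
          rw [← pow_succ]; congr 1; omega
        have hm1 : ((-1:ℂ)^(n-1)) ≠ 0 := by simp [pow_ne_zero]
        rw [hsgn, div_mul_div_comm]
        have hnum : (‖a^n‖:ℂ) * (((-1:ℂ)^(n-1) * -1) * (u^n - a^n)) =
            (-1:ℂ)^(n-1) * ((‖a^n‖:ℂ) * (a^n - u^n)) := by ring
        have hden : ((-1:ℂ)^(n-1) * a^n) * (1 - (starRingEnd ℂ) (a^n) * u^n) =
            (-1:ℂ)^(n-1) * (a^n * (1 - (starRingEnd ℂ) (a^n) * u^n)) := by ring
        rw [hnum, hden, mul_div_mul_left _ _ hm1, ← div_mul_div_comm]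

lemma hasProd_zero_of_zero {ι : Type*} {f : ι → ℂ} (k : ι) (h : f k = 0) : HasProd f 0 := by
  have hev : ∀ᶠ s : Finset ι in atTop, ∏ i ∈ s, f i = 0 := by
    filter_upwards [eventually_ge_atTop ({k} : Finset ι)] with s hs
    exact Finset.prod_eq_zero (hs (Finset.mem_singleton_self k)) h
  exact Tendsto.congr' (hev.mono fun s hs => hs.symm) tendsto_const_nhds

lemma hasProd_exp_tsum_log {ι : Type*} (f : ι → ℂ) (hf : ∀ i, f i ≠ 0)
    (h : Summable fun i => Complex.log (f i)) :
    HasProd f (Complex.exp (∑' i, Complex.log (f i))) := by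
  have h2 := h.hasSum.cexp
  refine h2.congr_fun fun i => ?_
  exact (Complex.exp_log (hf i)).symm

lemma exists_hasProd_ne_zero {ι : Type*} (f : ι → ℂ) (hf : ∀ i, f i ≠ 0)
    (h : Summable fun i => ‖f i - 1‖) : ∃ a, a ≠ 0 ∧ HasProd f a := by
  classical
  have hcof : ∀ᶠ i in cofinite, ‖f i - 1‖ < 1/2 :=
    h.tendsto_cofinite_zero.eventually (gt_mem_nhds (by norm_num))
  rw [eventually_cofinite] at hcof
  set L : ι → ℂ := fun i => Complex.log (f i) with hL
  have h1 : Summable (fun i => if ‖f i - 1‖ < 1/2 then L i else 0) := by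
    apply Summable.of_norm_bounded (h.mul_left 2)
    intro i
    by_cases hi : ‖f i - 1‖ < 1/2
    · simp only [hi, if_true]
      have : f i = 1 + (f i - 1) := by ring
      rw [hL]
      calc ‖Complex.log (f i)‖ = ‖Complex.log (1 + (f i - 1))‖ := by rw [← this]
        _ ≤ (3/2) * ‖f i - 1‖ := Complex.norm_log_one_add_half_le_self hi.le
        _ ≤ 2 * ‖f i - 1‖ := by nlinarith [norm_nonneg (f i - 1)]
    · simp only [hi, if_false, norm_zero]
      positivity
  have h2 : Summable (fun i => L i - if ‖f i - 1‖ < 1/2 then L i else 0) := by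
    apply summable_of_finite_support
    apply Set.Finite.subset hcof
    intro i hi
    simp only [Function.mem_support] at hi
    by_contra hc
    simp only [Set.mem_setOf_eq, not_not] at hc
    rw [if_pos (by simpa using hc), sub_self] at hi
    exact hi rfl
  have hLs : Summable L := by
    have := h1.add h2
    refine this.congr fun i => ?_
    ring
  exact ⟨Complex.exp (∑' i, L i), Complex.exp_ne_zero _, hasProd_exp_tsum_log f hf hLs⟩

lemma den_ne_zero {a u : ℂ} (ha : ‖a‖ < 1) (hu : ‖u‖ < 1) :
    (1 : ℂ) - (starRingEnd ℂ) a * u ≠ 0 := by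
  intro h
  have h2 : (starRingEnd ℂ) a * u = 1 := by linear_combination -h
  have := congrArg norm h2
  rw [norm_mul, Complex.norm_conj, norm_one] at this
  nlinarith [norm_nonneg a, norm_nonneg u]

lemma bf_self (a : ℂ) : blaschkeFactor a a = 0 := by
  simp [blaschkeFactor]

lemma bf_ne_zero {a u : ℂ} (ha0 : a ≠ 0) (ha : ‖a‖ < 1) (hu : ‖u‖ < 1)
    (hne : u ≠ a) : blaschkeFactor a u ≠ 0 := by
  unfold blaschkeFactor
  apply mul_ne_zero
  · apply div_ne_zero _ ha0
    simpa using ha0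
  · apply div_ne_zero
    · exact sub_ne_zero.2 fun h => hne h.symm
    · exact den_ne_zero ha hu

lemma bf_formula {a u : ℂ} (ha0 : a ≠ 0) (hden : (1:ℂ) - (starRingEnd ℂ) a * u ≠ 0) :
    blaschkeFactor a u - 1 =
      -((1 - (‖a‖ : ℂ)) * (a + (‖a‖ : ℂ) * u) /
        (a * (1 - (starRingEnd ℂ) a * u))) := by
  have hconj : a * (starRingEnd ℂ) a = ((‖a‖ : ℝ) : ℂ) ^ 2 := by
    rw [Complex.mul_conj]
    norm_cast
    exact (Complex.sq_norm a).symm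
  unfold blaschkeFactor
  field_simp
  ring_nf
  have hinv : (1 - u * (starRingEnd ℂ) a) * (1 - u * (starRingEnd ℂ) a)⁻¹ = 1 :=
    mul_inv_cancel₀ (by rw [mul_comm]; exact hden)
  linear_combination a * hinv + u * (1 - u * (starRingEnd ℂ) a)⁻¹ * hconj

lemma bf_sub_one_norm {a u : ℂ} (ha0 : a ≠ 0) (ha : ‖a‖ < 1)
    (hu : ‖u‖ < 1) :
    ‖blaschkeFactor a u - 1‖ ≤
      ((1 + ‖u‖) / (1 - ‖u‖)) * (1 - ‖a‖) := by
  have hden := den_ne_zero ha hu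
  rw [bf_formula ha0 hden, norm_neg]
  rw [norm_div, norm_mul, norm_mul]
  have h1 : ‖1 - (‖a‖ : ℂ)‖ = 1 - ‖a‖ := by
    rw [show ((1 : ℂ) - (‖a‖ : ℂ)) = ((1 - ‖a‖ : ℝ) : ℂ) by push_cast; ring,
      Complex.norm_real, Real.norm_eq_abs, abs_of_nonneg (by linarith)]
  have h2 : ‖a + (‖a‖ : ℂ) * u‖ ≤ ‖a‖ * (1 + ‖u‖) := by
    calc ‖a + (‖a‖ : ℂ) * u‖
        ≤ ‖a‖ + ‖(‖a‖ : ℂ) * u‖ := norm_add_le _ _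
      _ = ‖a‖ + ‖a‖ * ‖u‖ := by
          rw [norm_mul, Complex.norm_real, Real.norm_eq_abs, abs_of_nonneg (norm_nonneg a)]
      _ = ‖a‖ * (1 + ‖u‖) := by ring
  have h3 : 1 - ‖u‖ ≤ ‖1 - (starRingEnd ℂ) a * u‖ := by
    have h := norm_sub_norm_le (1:ℂ) ((starRingEnd ℂ) a * u)
    rw [norm_one, norm_mul, Complex.norm_conj] at h
    nlinarith [norm_nonneg a, norm_nonneg u]
  have ha0' : 0 < ‖a‖ := norm_pos_iff.mpr ha0
  have hu1 : 0 < 1 - ‖u‖ := by linarith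
  have hdenpos : 0 < ‖a‖ * ‖1 - (starRingEnd ℂ) a * u‖ := by
    apply mul_pos ha0'
    exact norm_pos_iff.mpr hden
  rw [h1, div_le_iff₀ hdenpos]
  calc (1 - ‖a‖) * ‖a + (‖a‖ : ℂ) * u‖
      ≤ (1 - ‖a‖) * (‖a‖ * (1 + ‖u‖)) := by
        apply mul_le_mul_of_nonneg_left h2 (by linarith)
    _ ≤ (1 + ‖u‖) / (1 - ‖u‖) * (1 - ‖a‖) *
        (‖a‖ * ‖1 - (starRingEnd ℂ) a * u‖) := by
        rw [div_mul_eq_mul_div, div_mul_eq_mul_div, le_div_iff₀ hu1]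
        have hu0 := norm_nonneg u
        have hA : (0:ℝ) ≤ 1 - ‖a‖ := by linarith
        have c_nonneg : (0:ℝ) ≤ (1 - ‖a‖) * ‖a‖ * (1 + ‖u‖) :=
          mul_nonneg (mul_nonneg hA ha0'.le) (by linarith)
        nlinarith [mul_le_mul_of_nonneg_left h3 c_nonneg]

lemma bf_summable {ι : Type*} {z : ι → ℂ} (hz : ∀ k, ‖z k‖ < 1)
    (hz0 : ∀ k, z k ≠ 0) (hsum : Summable fun k => 1 - ‖z k‖)
    {u : ℂ} (hu : ‖u‖ < 1) :
    Summable fun k => ‖blaschkeFactor (z k) u - 1‖ := by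
  apply Summable.of_nonneg_of_le (fun k => norm_nonneg _)
    (fun k => bf_sub_one_norm (hz0 k) (hz k) hu)
  exact hsum.mul_left _

lemma blaschke_multipliable {ι : Type*} {z : ι → ℂ} (hz : ∀ k, ‖z k‖ < 1)
    (hz0 : ∀ k, z k ≠ 0) (hsum : Summable fun k => 1 - ‖z k‖)
    {u : ℂ} (hu : ‖u‖ < 1) :
    Multipliable fun k => blaschkeFactor (z k) u := by
  by_cases h : ∃ k, u = z k
  · obtain ⟨k, rfl⟩ := h
    exact ⟨0, hasProd_zero_of_zero k (bf_self _)⟩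
  · push_neg at h
    obtain ⟨a, _, ha⟩ := exists_hasProd_ne_zero _
      (fun k => bf_ne_zero (hz0 k) (hz k) hu (h k)) (bf_summable hz hz0 hsum hu)
    exact ha.multipliable

lemma blaschke_tprod_ne_zero {ι : Type*} {z : ι → ℂ} (hz : ∀ k, ‖z k‖ < 1)
    (hz0 : ∀ k, z k ≠ 0) (hsum : Summable fun k => 1 - ‖z k‖)
    {u : ℂ} (hu : ‖u‖ < 1) (h : ∀ k, u ≠ z k) :
    (∏' k, blaschkeFactor (z k) u) ≠ 0 := by
  obtain ⟨a, ha0, ha⟩ := exists_hasProd_ne_zero _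
    (fun k => bf_ne_zero (hz0 k) (hz k) hu (h k)) (bf_summable hz hz0 hsum hu)
  rw [ha.tprod_eq]
  exact ha0

lemma one_sub_pow_le_nat (n : ℕ) {t : ℝ} (h0 : 0 ≤ t) (h1 : t ≤ 1) :
    1 - t ^ n ≤ n * (1 - t) := by
  have hgeom : (1 - t) * (∑ i ∈ Finset.range n, t ^ i) = 1 - t ^ n := by
    have := geom_sum_mul t n
    linear_combination -this
  have hsumle : (∑ i ∈ Finset.range n, t ^ i) ≤ n := by
    calc (∑ i ∈ Finset.range n, t ^ i) ≤ ∑ _i ∈ Finset.range n, (1:ℝ) :=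
        Finset.sum_le_sum fun i _ => pow_le_one₀ h0 h1
      _ = n := by simp
  nlinarith [sub_nonneg.2 h1]

lemma pow_mod_eq {n : ℕ} {ξ : ℂ} (hξ : IsPrimitiveRoot ξ n) (hn : 0 < n) (m : ℕ) :
    ξ ^ m = ξ ^ (m % n) := by
  conv_lhs => rw [← Nat.div_add_mod m n]
  rw [pow_add, pow_mul, hξ.pow_eq_one, one_pow, one_mul]

theorem rotation_invariant_blaschke_factors_through_power
    (n : ℕ) (hn : 2 ≤ n) (ξ : ℂ) (hξ : IsPrimitiveRoot ξ n)
    (z : ℕ → ℂ) (hz : ∀ k, z k ∈ ball (0:ℂ) 1) (hz0 : ∀ k, z k ≠ 0)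
    (hsimple : Function.Injective z)
    (hsum : Summable fun k => 1 - ‖z k‖)
    (B : ℂ → ℂ)
    (hB : ∀ w ∈ ball (0:ℂ) 1, B w = ∏' k : ℕ, blaschkeFactor (z k) w)
    (hinv : ∀ w ∈ ball (0:ℂ) 1, B (ξ * w) = B w) :
    (∀ k, ∃ j, z j = ξ * z k) ∧
    ∃ (c : ℂ) (w : ℕ → ℂ) (B₁ : ℂ → ℂ),
      ‖c‖ = 1 ∧
      (∀ j, w j ∈ ball (0:ℂ) 1) ∧ (∀ j, w j ≠ 0) ∧
      (Summable fun j => 1 - ‖w j‖) ∧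
      (∀ u ∈ ball (0:ℂ) 1, B₁ u = ∏' j : ℕ, blaschkeFactor (w j) u) ∧
      (∀ u ∈ ball (0:ℂ) 1, B u = c * B₁ (u ^ n)) := by
  classical
  have hn0 : 0 < n := by omega
  have hz' : ∀ k, ‖z k‖ < 1 := by
    intro k
    have := hz k
    rwa [mem_ball, dist_zero_right] at this
  have hξa : ‖ξ‖ = 1 := abs_of_primitive hξ hn0
  -- Part 1
  have key : ∀ k, ∃ j, z j = ξ * z k := by
    intro k
    by_contra hno
    push_neg at hno
    have h1 : B (z k) = 0 := by
      rw [hB _ (hz k)]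
      exact (hasProd_zero_of_zero k (bf_self _)).tprod_eq
    have habs : ‖ξ * z k‖ < 1 := by
      rw [norm_mul, hξa, one_mul]; exact hz' k
    have h2 : B (ξ * z k) = 0 := by rw [hinv _ (hz k)]; exact h1
    rw [hB _ (mem_ball_zero_iff.2 (by exact habs))] at h2
    exact blaschke_tprod_ne_zero hz' hz0 hsum habs (fun j h => hno j h.symm) h2
  refine ⟨key, ?_⟩
  -- iterated version
  have key_pow : ∀ (m : ℕ) (k : ℕ), ∃ j, z j = ξ ^ m * z k := by
    intro m
    induction m with
    | zero => exact fun k => ⟨k, by simp⟩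
    | succ m ih =>
      intro k
      obtain ⟨j, hj⟩ := ih k
      obtain ⟨j', hj'⟩ := key j
      exact ⟨j', by rw [hj', hj, ← mul_assoc, ← pow_succ']⟩
  -- orbit equivalence on indices
  set Rel : ℕ → ℕ → Prop := fun k j => ∃ m : ℕ, z j = ξ ^ m * z k with hRel
  have hRel_refl : ∀ k, Rel k k := fun k => ⟨0, by simp⟩
  have hRel_symm : ∀ {k j}, Rel k j → Rel j k := by
    rintro k j ⟨m, hm⟩
    refine ⟨m * (n - 1), ?_⟩
    rw [hm, ← mul_assoc, ← pow_add]
    have he : m * (n - 1) + m = n * m := by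
      have hn' : n - 1 + 1 = n := Nat.succ_pred_eq_of_pos hn0
      calc m * (n - 1) + m = m * (n - 1 + 1) := by ring
        _ = n * m := by rw [hn']; ring
    rw [he, pow_mul, hξ.pow_eq_one, one_pow, one_mul]
  have hRel_trans : ∀ {k j l}, Rel k j → Rel j l → Rel k l := by
    rintro k j l ⟨m, hm⟩ ⟨m', hm'⟩
    exact ⟨m' + m, by rw [hm', hm, ← mul_assoc, ← pow_add]⟩
  have hex : ∀ k, ∃ j, Rel k j := fun k => ⟨k, hRel_refl k⟩
  set rep : ℕ → ℕ := fun k => Nat.find (hex k) with hrep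
  have hrep_rel : ∀ k, Rel k (rep k) := fun k => Nat.find_spec (hex k)
  have hrep_min : ∀ k j, Rel k j → rep k ≤ j := fun k j h => Nat.find_min' (hex k) h
  have hrep_eq : ∀ k j, Rel k j → rep k = rep j := by
    intro k j h
    exact le_antisymm (hrep_min k _ (hRel_trans h (hrep_rel j)))
      (hrep_min j _ (hRel_trans (hRel_symm h) (hrep_rel k)))
  have hrep_idem : ∀ k, rep (rep k) = rep k := fun k => (hrep_eq k (rep k) (hrep_rel k)).symm
  -- exponent
  have hexp : ∀ k, ∃ m, m < n ∧ z k = ξ ^ m * z (rep k) := by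
    intro k
    obtain ⟨m, hm⟩ := hRel_symm (hrep_rel k)
    refine ⟨m % n, Nat.mod_lt _ hn0, ?_⟩
    rw [hm, pow_mod_eq hξ hn0 m]
  set mIdx : ℕ → ℕ := fun k => (hexp k).choose with hmIdx
  have hmIdx_lt : ∀ k, mIdx k < n := fun k => (hexp k).choose_spec.1
  have hmIdx_eq : ∀ k, z k = ξ ^ mIdx k * z (rep k) := fun k => (hexp k).choose_spec.2
  -- set of representatives
  set R : Set ℕ := {k | rep k = k} with hRdef
  have hclassfin : ∀ r : ℕ, {k | rep k = r}.Finite := by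
    intro r
    have hsub : {k | rep k = r} ⊆ z ⁻¹' ((fun m => ξ ^ m * z r) '' Set.Iio n) := by
      intro k hk
      simp only [Set.mem_setOf_eq] at hk
      refine ⟨mIdx k, hmIdx_lt k, ?_⟩
      rw [← hk]
      exact (hmIdx_eq k).symm
    exact Set.Finite.subset (Set.Finite.preimage hsimple.injOn
      ((Set.finite_Iio n).image _)) hsub
  have hR_inf : R.Infinite := by
    intro hfin
    have huniv : (Set.univ : Set ℕ) ⊆ ⋃ r ∈ R, {k | rep k = r} := by
      intro k _
      refine Set.mem_biUnion ?_ rfl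
      exact hrep_idem k
    exact Set.infinite_univ (Set.Finite.subset (hfin.biUnion fun r _ => hclassfin r) huniv)
  have hRcnt : Infinite ↥R := hR_inf.to_subtype
  have hden : Denumerable ↥R := @Denumerable.ofEncodableOfInfinite ↥R (Encodable.ofCountable _) hRcnt
  let e : ℕ ≃ ↥R := (Denumerable.eqv ↥R).symm
  have he_mem : ∀ j, rep ((e j : ℕ)) = (e j : ℕ) := fun j => (e j).2
  -- the bijection ℕ ≃ ℕ × Fin n
  let φf : ℕ → ℕ × Fin n := fun k => (e.symm ⟨rep k, hrep_idem k⟩, ⟨mIdx k, hmIdx_lt k⟩)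
  have hφinj : Function.Injective φf := by
    intro k k' hkk
    have h1 : rep k = rep k' := by
      have := congrArg (fun p : ℕ × Fin n => ((e p.1 : ℕ))) hkk
      simpa [φf] using this
    have h2 : mIdx k = mIdx k' := by
      have := congrArg (fun p : ℕ × Fin n => (p.2 : ℕ)) hkk
      simpa using this
    apply hsimple
    rw [hmIdx_eq k, hmIdx_eq k', h1, h2]
  have hφsurj : Function.Surjective φf := by
    rintro ⟨j, m⟩
    obtain ⟨k, hk⟩ := key_pow (m : ℕ) ((e j : ℕ))
    have hrel : Rel ((e j : ℕ)) k := ⟨m, hk⟩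
    have hrepk : rep k = (e j : ℕ) := by
      rw [← hrep_eq _ _ hrel, he_mem j]
    refine ⟨k, ?_⟩
    have hm' : mIdx k = (m : ℕ) := by
      apply hξ.pow_inj (hmIdx_lt k) m.2
      have h1 : z k = ξ ^ mIdx k * z ((e j : ℕ)) := by rw [hmIdx_eq k, hrepk]
      have := h1.symm.trans hk
      exact mul_right_cancel₀ (hz0 _) this
    simp only [φf]
    ext
    · simp only
      rw [show (⟨rep k, hrep_idem k⟩ : ↥R) = e j from Subtype.ext hrepk, Equiv.symm_apply_apply]
    · simpa using hm'
  let φ : ℕ ≃ ℕ × Fin n := Equiv.ofBijective φf ⟨hφinj, hφsurj⟩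
  have hφinv : ∀ p : ℕ × Fin n, z (φ.symm p) = ξ ^ ((p.2 : Fin n) : ℕ) * z ((e p.1 : ℕ)) := by
    intro p
    have happ : φ (φ.symm p) = p := φ.apply_symm_apply p
    set k := φ.symm p with hk
    have h1 : e.symm ⟨rep k, hrep_idem k⟩ = p.1 := congrArg Prod.fst happ
    have h2 : mIdx k = ((p.2 : Fin n) : ℕ) := by
      have := congrArg (fun q : ℕ × Fin n => ((q.2 : Fin n) : ℕ)) happ
      simpa [φ, Equiv.ofBijective, φf] using this
    have h3 : rep k = (e p.1 : ℕ) := by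
      have := congrArg (fun j => ((e j : ℕ))) h1
      simpa using this
    rw [hmIdx_eq k, h2, h3]
  -- the data
  set a : ℕ → ℂ := fun j => z ((e j : ℕ)) with ha
  set w : ℕ → ℂ := fun j => (a j) ^ n with hw
  set B₁ : ℂ → ℂ := fun u => ∏' j, blaschkeFactor (w j) u with hB₁
  have ha0 : ∀ j, a j ≠ 0 := fun j => hz0 _
  have ha1 : ∀ j, ‖a j‖ < 1 := fun j => hz' _
  have hw1 : ∀ j, ‖w j‖ < 1 := by
    intro j
    rw [hw]
    simp only [norm_pow]
    exact pow_lt_one₀ (norm_nonneg _) (ha1 j) hn0.ne'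
  refine ⟨1, w, B₁, by simp, fun j => mem_ball_zero_iff.2 (by exact hw1 j),
    fun j => pow_ne_zero _ (ha0 j), ?_, fun u _ => rfl, ?_⟩
  · -- summability
    have hsub : Summable fun j => 1 - ‖a j‖ := by
      have hinj : Function.Injective (fun j => ((e j : ℕ))) := by
        intro j j' hjj
        exact e.injective (Subtype.ext hjj)
      exact hsum.comp_injective hinj
    apply Summable.of_nonneg_of_le (fun j => by
        have := hw1 j
        linarith)
      (fun j => ?_) (hsub.mul_left (n : ℝ))
    rw [hw]
    simp only [norm_pow]
    exact one_sub_pow_le_nat n (norm_nonneg _) (ha1 j).le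
  · -- the factorization
    intro u hu
    have hu' : ‖u‖ < 1 := by
      have := mem_ball_zero_iff.1 hu
      exact this
    rw [one_mul]
    have hProdf : HasProd (fun k => blaschkeFactor (z k) u) (B u) := by
      rw [hB u hu]
      exact (blaschke_multipliable hz' hz0 hsum hu').hasProd
    have hProdg : HasProd ((fun k => blaschkeFactor (z k) u) ∘ φ.symm) (B u) :=
      (Equiv.hasProd_iff φ.symm).2 hProdf
    have hProdg' : HasProd (fun p : ℕ × Fin n => blaschkeFactor (ξ ^ ((p.2 : Fin n) : ℕ) * a p.1) u) (B u) := by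
      refine hProdg.congr_fun fun p => ?_
      simp only [Function.comp_apply]
      rw [hφinv p]
    have fib : ∀ j, HasProd (fun m : Fin n => blaschkeFactor (ξ ^ (m : ℕ) * a j) u)
        (blaschkeFactor (w j) (u ^ n)) := by
      intro j
      have h1 : HasProd (fun m : Fin n => blaschkeFactor (ξ ^ (m : ℕ) * a j) u)
          (∏ m : Fin n, blaschkeFactor (ξ ^ (m : ℕ) * a j) u) := hasProd_fintype _
      have h2 : (∏ m : Fin n, blaschkeFactor (ξ ^ (m : ℕ) * a j) u)
          = blaschkeFactor (w j) (u ^ n) := by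
        rw [Fin.prod_univ_eq_prod_range (fun m => blaschkeFactor (ξ ^ m * a j) u) n]
        rw [orbit_prod hξ hn0 (ha0 j) (ha1 j) hu']
      rwa [h2] at h1
    have hfinal : HasProd (fun j => blaschkeFactor (w j) (u ^ n)) (B u) :=
      HasProd.prod_fiberwise hProdg' fib
    rw [hB₁]
    exact hfinal.tprod_eq.symm
end
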